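/- arXiv:1810.09212 — 2 statements merged into one kernel-verified Lean document; each statement's English description precedes it below -/
import Mathlib

section
/- Let ε > 0, T > 0 and γ ∈ ℝ. Suppose u : ℝ × ℝ² → ℝ is infinitely differentiable, set w = −ε²Δu + f(u), and assume that ∂ₜu = Δw on [0,T] × closure(Ω) and that ∂ₙu(t,·) = 0 and ∂ₙw(t,·) = 0 at every point of the four open edges of ∂Ω for every t ∈ [0,T]. Then for every t ∈ [0,T] and every infinitely differentiable v : ℝ² → ℝ, the Nitsche variational identity holds: ∫_Ω ∂ₜu(t,·) v dx + ε² a₁(u(t,·), v) + ∫_Ω ∇f(u(t,·)) · ∇v dx = 0. -/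
open MeasureTheory Set

noncomputable def pdx (φ : ℝ × ℝ → ℝ) (p : ℝ × ℝ) : ℝ := fderiv ℝ φ p (1, 0)

noncomputable def pdy (φ : ℝ × ℝ → ℝ) (p : ℝ × ℝ) : ℝ := fderiv ℝ φ p (0, 1)

noncomputable def lap (φ : ℝ × ℝ → ℝ) (p : ℝ × ℝ) : ℝ := pdx (pdx φ) p + pdy (pdy φ) p

/-- The open unit square `Ω = (0,1) × (0,1)`. -/
def unitSq : Set (ℝ × ℝ) := Ioo (0:ℝ) 1 ×ˢ Ioo (0:ℝ) 1

noncomputable def F (s : ℝ) : ℝ := (1/4) * (s^2 - 1)^2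

noncomputable def fDW (s : ℝ) : ℝ := s^3 - s

noncomputable def dtu (u : ℝ → ℝ × ℝ → ℝ) (t : ℝ) (p : ℝ × ℝ) : ℝ :=
  deriv (fun s => u s p) t

def ZeroNormalDeriv (φ : ℝ × ℝ → ℝ) : Prop :=
  (∀ y ∈ Ioo (0:ℝ) 1, -pdx φ (0, y) = 0 ∧ pdx φ (1, y) = 0) ∧
  (∀ x ∈ Ioo (0:ℝ) 1, -pdy φ (x, 0) = 0 ∧ pdy φ (x, 1) = 0)

/-- The boundary integral `∫_{∂Ω} g ds`: the sum of the four one-dimensional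
arclength integrals over the edges of the unit square. -/
noncomputable def bInt (g : ℝ × ℝ → ℝ) : ℝ :=
  (∫ y in Ioo (0:ℝ) 1, g (0, y)) + (∫ y in Ioo (0:ℝ) 1, g (1, y)) +
  (∫ x in Ioo (0:ℝ) 1, g (x, 0)) + (∫ x in Ioo (0:ℝ) 1, g (x, 1))

/-- The outward normal derivative `∂ₙφ` on `∂Ω` (on `{0}×(0,1)` it is `-∂φ/∂x`,
on `{1}×(0,1)` it is `∂φ/∂x`, on `(0,1)×{0}` it is `-∂φ/∂y`, on `(0,1)×{1}` it
is `∂φ/∂y`). -/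
noncomputable def nder (φ : ℝ × ℝ → ℝ) (p : ℝ × ℝ) : ℝ :=
  if p.1 = 0 then -pdx φ p
  else if p.1 = 1 then pdx φ p
  else if p.2 = 0 then -pdy φ p
  else pdy φ p

/-- The Nitsche bilinear form
`a₁(w,v) = ∫_Ω Δw Δv − ∫_{∂Ω} Δw ∂ₙv − ∫_{∂Ω} ∂ₙw Δv + γ ∫_{∂Ω} ∂ₙw ∂ₙv`. -/
noncomputable def a1 (γ : ℝ) (w v : ℝ × ℝ → ℝ) : ℝ :=
  (∫ p in unitSq, lap w p * lap v p)
    - bInt (fun p => lap w p * nder v p)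
    - bInt (fun p => nder w p * lap v p)
    + γ * bInt (fun p => nder w p * nder v p)


section NitscheAux

open MeasureTheory Set

private lemma contDiff_pdx' {φ : ℝ × ℝ → ℝ} (hφ : ContDiff ℝ (⊤ : ℕ∞) φ) :
    ContDiff ℝ (⊤ : ℕ∞) (pdx φ) :=
  (hφ.fderiv_right (by exact_mod_cast le_top)).clm_apply contDiff_const

private lemma contDiff_pdy' {φ : ℝ × ℝ → ℝ} (hφ : ContDiff ℝ (⊤ : ℕ∞) φ) :
    ContDiff ℝ (⊤ : ℕ∞) (pdy φ) :=
  (hφ.fderiv_right (by exact_mod_cast le_top)).clm_apply contDiff_const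

private lemma contDiff_lap' {φ : ℝ × ℝ → ℝ} (hφ : ContDiff ℝ (⊤ : ℕ∞) φ) :
    ContDiff ℝ (⊤ : ℕ∞) (lap φ) :=
  (contDiff_pdx' (contDiff_pdx' hφ)).add (contDiff_pdy' (contDiff_pdy' hφ))

private lemma integrableOn_unitSq' {h : ℝ × ℝ → ℝ} (hh : Continuous h) :
    IntegrableOn h unitSq volume := by
  have h1 : IntegrableOn h (Icc ((0:ℝ),(0:ℝ)) (1,1)) volume :=
    hh.continuousOn.integrableOn_compact isCompact_Icc
  refine h1.mono_set ?_
  rw [Icc_prod_eq]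
  exact Set.prod_mono Ioo_subset_Icc_self Ioo_subset_Icc_self

private lemma unitSq_ae_eq_Icc :
    (unitSq : Set (ℝ × ℝ)) =ᵐ[volume] Icc ((0:ℝ),(0:ℝ)) (1,1) := by
  rw [Icc_prod_eq]
  exact Measure.set_prod_ae_eq Ioo_ae_eq_Icc Ioo_ae_eq_Icc

private lemma hasFDerivAt_of_contDiff {φ : ℝ × ℝ → ℝ} (hφ : ContDiff ℝ (⊤ : ℕ∞) φ)
    (p : ℝ × ℝ) : HasFDerivAt φ (fderiv ℝ φ p) p :=
  (hφ.differentiable (by simp) p).hasFDerivAt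

/-- Green's identity on the unit square:
`∫_Ω (Δφ ψ + ∇φ·∇ψ) = ` boundary terms. -/
private lemma green' {φ ψ : ℝ × ℝ → ℝ} (hφ : ContDiff ℝ (⊤ : ℕ∞) φ)
    (hψ : ContDiff ℝ (⊤ : ℕ∞) ψ) :
    (∫ p in unitSq, (lap φ p * ψ p + (pdx φ p * pdx ψ p + pdy φ p * pdy ψ p)))
      = (((∫ x in Ioo (0:ℝ) 1, pdy φ (x,1) * ψ (x,1))
            - ∫ x in Ioo (0:ℝ) 1, pdy φ (x,0) * ψ (x,0))
          + ∫ y in Ioo (0:ℝ) 1, pdx φ (1,y) * ψ (1,y))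
        - ∫ y in Ioo (0:ℝ) 1, pdx φ (0,y) * ψ (0,y) := by
  set f : ℝ × ℝ → ℝ := fun p => pdx φ p * ψ p with hf
  set g : ℝ × ℝ → ℝ := fun p => pdy φ p * ψ p with hg
  set f' : ℝ × ℝ → (ℝ × ℝ) →L[ℝ] ℝ :=
    fun p => pdx φ p • fderiv ℝ ψ p + ψ p • fderiv ℝ (pdx φ) p with hf'
  set g' : ℝ × ℝ → (ℝ × ℝ) →L[ℝ] ℝ :=
    fun p => pdy φ p • fderiv ℝ ψ p + ψ p • fderiv ℝ (pdy φ) p with hg'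
  have hkey : ∀ p : ℝ × ℝ,
      f' p (1, 0) + g' p (0, 1)
        = lap φ p * ψ p + (pdx φ p * pdx ψ p + pdy φ p * pdy ψ p) := by
    intro p
    simp only [hf', hg', ContinuousLinearMap.add_apply, ContinuousLinearMap.smul_apply,
      smul_eq_mul, lap, pdx, pdy]
    ring
  have hfun : (fun p : ℝ × ℝ => f' p (1, 0) + g' p (0, 1))
      = fun p => lap φ p * ψ p + (pdx φ p * pdx ψ p + pdy φ p * pdy ψ p) :=
    funext hkey
  have hcont : Continuous fun p : ℝ × ℝ =>
      lap φ p * ψ p + (pdx φ p * pdx ψ p + pdy φ p * pdy ψ p) :=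
    ((contDiff_lap' hφ).continuous.mul hψ.continuous).add
      (((contDiff_pdx' hφ).continuous.mul (contDiff_pdx' hψ).continuous).add
        ((contDiff_pdy' hφ).continuous.mul (contDiff_pdy' hψ).continuous))
  have Hdf : ∀ p ∈ (Ioo (0:ℝ) 1 ×ˢ Ioo (0:ℝ) 1) \ (∅ : Set (ℝ × ℝ)),
      HasFDerivAt f (f' p) p := fun p _ =>
    (hasFDerivAt_of_contDiff (contDiff_pdx' hφ) p).mul (hasFDerivAt_of_contDiff hψ p)
  have Hdg : ∀ p ∈ (Ioo (0:ℝ) 1 ×ˢ Ioo (0:ℝ) 1) \ (∅ : Set (ℝ × ℝ)),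
      HasFDerivAt g (g' p) p := fun p _ =>
    (hasFDerivAt_of_contDiff (contDiff_pdy' hφ) p).mul (hasFDerivAt_of_contDiff hψ p)
  have Hi : IntegrableOn (fun p : ℝ × ℝ => f' p (1, 0) + g' p (0, 1))
      (Icc ((0:ℝ),(0:ℝ)) (1,1)) volume := by
    rw [hfun]
    exact hcont.continuousOn.integrableOn_compact isCompact_Icc
  have Hcf : ContinuousOn f (Icc ((0:ℝ),(0:ℝ)) (1,1)) :=
    ((contDiff_pdx' hφ).continuous.mul hψ.continuous).continuousOn
  have Hcg : ContinuousOn g (Icc ((0:ℝ),(0:ℝ)) (1,1)) :=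
    ((contDiff_pdy' hφ).continuous.mul hψ.continuous).continuousOn
  have hdiv := integral_divergence_prod_Icc_of_hasFDerivAt_off_countable_of_le
    f g f' g' ((0:ℝ),(0:ℝ)) (1,1) (by constructor <;> norm_num)
    (∅ : Set (ℝ × ℝ)) countable_empty Hcf Hcg Hdf Hdg Hi
  have hL : (∫ p in unitSq, (lap φ p * ψ p + (pdx φ p * pdx ψ p + pdy φ p * pdy ψ p)))
      = ∫ p in Icc ((0:ℝ),(0:ℝ)) (1,1), f' p (1, 0) + g' p (0, 1) := by
    rw [hfun]
    exact setIntegral_congr_set unitSq_ae_eq_Icc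
  rw [hL, hdiv]
  have e1 : ∀ h : ℝ → ℝ, (∫ x in (0:ℝ)..1, h x) = ∫ x in Ioo (0:ℝ) 1, h x := by
    intro h
    rw [intervalIntegral.integral_of_le zero_le_one,
      setIntegral_congr_set (Ioo_ae_eq_Ioc (a := (0:ℝ)) (b := 1)).symm]
  rw [e1, e1, e1, e1]

private lemma bInt_nder_mul_zero {φ : ℝ × ℝ → ℝ} (h : ZeroNormalDeriv φ)
    (g : ℝ × ℝ → ℝ) : bInt (fun p => nder φ p * g p) = 0 := by
  unfold bInt
  have h0 : ∫ y in Ioo (0:ℝ) 1, nder φ (0, y) * g (0, y) = 0 := by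
    rw [setIntegral_congr_fun measurableSet_Ioo
      (g := fun _ => (0:ℝ)) (fun y hy => by
        simp only [nder, if_true, eq_self_iff_true]
        rw [(h.1 y hy).1, zero_mul])]
    simp
  have h1 : ∫ y in Ioo (0:ℝ) 1, nder φ (1, y) * g (1, y) = 0 := by
    rw [setIntegral_congr_fun measurableSet_Ioo
      (g := fun _ => (0:ℝ)) (fun y hy => by
        simp only [nder]
        norm_num [(h.1 y hy).2])]
    simp
  have h2 : ∫ x in Ioo (0:ℝ) 1, nder φ (x, 0) * g (x, 0) = 0 := by
    rw [setIntegral_congr_fun measurableSet_Ioo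
      (g := fun _ => (0:ℝ)) (fun x hx => by
        simp [nder, ne_of_gt hx.1, ne_of_lt hx.2, neg_eq_zero.mp (h.2 x hx).1])]
    simp
  have h3 : ∫ x in Ioo (0:ℝ) 1, nder φ (x, 1) * g (x, 1) = 0 := by
    rw [setIntegral_congr_fun measurableSet_Ioo
      (g := fun _ => (0:ℝ)) (fun x hx => by
        simp [nder, ne_of_gt hx.1, ne_of_lt hx.2, (h.2 x hx).2])]
    simp
  rw [h0, h1, h2, h3]; ring

end NitscheAux

/-- **The Nitsche variational identity.** If `u` is smooth, `w = -ε²Δu + f(u)`,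
`∂ₜu = Δw` on `[0,T] × closure Ω`, and `∂ₙu = ∂ₙw = 0` on the four open edges of `∂Ω`,
then for every `t ∈ [0,T]` and every smooth `v`,
`∫_Ω ∂ₜu v + ε² a₁(u(t,·), v) + ∫_Ω ∇f(u(t,·))·∇v = 0`. -/
theorem nitsche_variational_identity (ε T γ : ℝ) (hε : 0 < ε) (hT : 0 < T)
    (u : ℝ → ℝ × ℝ → ℝ) (hu : ContDiff ℝ (⊤ : ℕ∞) (Function.uncurry u))
    (w : ℝ → ℝ × ℝ → ℝ)
    (hw : ∀ t p, w t p = -ε^2 * lap (u t) p + fDW (u t p))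
    (heq : ∀ t ∈ Icc (0:ℝ) T, ∀ p ∈ closure unitSq, dtu u t p = lap (w t) p)
    (hbcu : ∀ t ∈ Icc (0:ℝ) T, ZeroNormalDeriv (u t))
    (hbcw : ∀ t ∈ Icc (0:ℝ) T, ZeroNormalDeriv (w t)) :
    ∀ t ∈ Icc (0:ℝ) T, ∀ v : ℝ × ℝ → ℝ, ContDiff ℝ (⊤ : ℕ∞) v →
      (∫ p in unitSq, dtu u t p * v p) + ε^2 * a1 γ (u t) v +
        (∫ p in unitSq,
          (pdx (fun q => fDW (u t q)) p * pdx v p +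
           pdy (fun q => fDW (u t q)) p * pdy v p)) = 0 := by
  intro t ht v hv
  have huncurry : u t = Function.uncurry u ∘ fun p : ℝ × ℝ => (t, p) := rfl
  have hUc : ContDiff ℝ (⊤ : ℕ∞) (u t) := by
    rw [huncurry]; exact hu.comp (contDiff_const.prodMk contDiff_id)
  have hfDWc : ContDiff ℝ (⊤ : ℕ∞) (fun q => fDW (u t q)) := by
    have h1 : ContDiff ℝ (⊤ : ℕ∞) fDW := by
      unfold fDW
      exact (contDiff_id.pow 3).sub contDiff_id
    exact h1.comp hUc
  have hlapUc : ContDiff ℝ (⊤ : ℕ∞) (lap (u t)) := contDiff_lap' hUc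
  have hWeq : w t = fun p => -ε ^ 2 * lap (u t) p + fDW (u t p) := funext (hw t)
  have hWc : ContDiff ℝ (⊤ : ℕ∞) (w t) := by
    rw [hWeq]; exact (contDiff_const.mul hlapUc).add hfDWc
  have hdiff1 : ∀ p : ℝ × ℝ, DifferentiableAt ℝ (fun q => -ε ^ 2 * lap (u t) q) p := fun p =>
    (hlapUc.differentiable (by simp) p).const_mul _
  have hdiff2 : ∀ p : ℝ × ℝ, DifferentiableAt ℝ (fun q => fDW (u t q)) p :=
    fun p => hfDWc.differentiable (by simp) p
  have hpdW : ∀ z : ℝ × ℝ, ∀ p : ℝ × ℝ,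
      fderiv ℝ (w t) p z
        = -ε ^ 2 * fderiv ℝ (lap (u t)) p z + fderiv ℝ (fun q => fDW (u t q)) p z := by
    intro z p
    rw [hWeq, fderiv_fun_add (hdiff1 p) (hdiff2 p),
      fderiv_const_mul (hlapUc.differentiable (by simp) p)]
    simp [ContinuousLinearMap.add_apply, ContinuousLinearMap.smul_apply, smul_eq_mul]
  have hmU : MeasurableSet unitSq := measurableSet_Ioo.prod measurableSet_Ioo
  -- Step 1: replace `dtu` by `lap (w t)` on the square
  have hstep1 : (∫ p in unitSq, dtu u t p * v p) = ∫ p in unitSq, lap (w t) p * v p :=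
    setIntegral_congr_fun hmU (fun p hp => by rw [heq t ht p (subset_closure hp)])
  -- Step 2: Green's identity for (w t, v); boundary terms vanish
  have hbw := hbcw t ht
  have hG1 := green' hWc hv
  have z1 : ∫ x in Ioo (0:ℝ) 1, pdy (w t) (x,1) * v (x,1) = 0 := by
    rw [setIntegral_congr_fun measurableSet_Ioo (g := fun _ => (0:ℝ))
      (fun x hx => by rw [(hbw.2 x hx).2, zero_mul])]
    simp
  have z2 : ∫ x in Ioo (0:ℝ) 1, pdy (w t) (x,0) * v (x,0) = 0 := by
    rw [setIntegral_congr_fun measurableSet_Ioo (g := fun _ => (0:ℝ))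
      (fun x hx => by rw [neg_eq_zero.mp (hbw.2 x hx).1, zero_mul])]
    simp
  have z3 : ∫ y in Ioo (0:ℝ) 1, pdx (w t) (1,y) * v (1,y) = 0 := by
    rw [setIntegral_congr_fun measurableSet_Ioo (g := fun _ => (0:ℝ))
      (fun y hy => by rw [(hbw.1 y hy).2, zero_mul])]
    simp
  have z4 : ∫ y in Ioo (0:ℝ) 1, pdx (w t) (0,y) * v (0,y) = 0 := by
    rw [setIntegral_congr_fun measurableSet_Ioo (g := fun _ => (0:ℝ))
      (fun y hy => by rw [neg_eq_zero.mp (hbw.1 y hy).1, zero_mul])]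
    simp
  rw [z1, z2, z3, z4] at hG1
  have Ia : IntegrableOn (fun p => lap (w t) p * v p) unitSq volume :=
    integrableOn_unitSq' ((contDiff_lap' hWc).continuous.mul hv.continuous)
  have Ib : IntegrableOn (fun p => pdx (w t) p * pdx v p + pdy (w t) p * pdy v p)
      unitSq volume :=
    integrableOn_unitSq'
      (((contDiff_pdx' hWc).continuous.mul (contDiff_pdx' hv).continuous).add
        ((contDiff_pdy' hWc).continuous.mul (contDiff_pdy' hv).continuous))
  rw [integral_add Ia Ib] at hG1
  -- Step 3: decompose the gradient of w t
  have Ic : IntegrableOn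
      (fun p => pdx (lap (u t)) p * pdx v p + pdy (lap (u t)) p * pdy v p) unitSq volume :=
    integrableOn_unitSq'
      (((contDiff_pdx' hlapUc).continuous.mul (contDiff_pdx' hv).continuous).add
        ((contDiff_pdy' hlapUc).continuous.mul (contDiff_pdy' hv).continuous))
  have Id : IntegrableOn
      (fun p => pdx (fun q => fDW (u t q)) p * pdx v p
        + pdy (fun q => fDW (u t q)) p * pdy v p) unitSq volume :=
    integrableOn_unitSq'
      (((contDiff_pdx' hfDWc).continuous.mul (contDiff_pdx' hv).continuous).add
        ((contDiff_pdy' hfDWc).continuous.mul (contDiff_pdy' hv).continuous))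
  have hgradsplit : (∫ p in unitSq, (pdx (w t) p * pdx v p + pdy (w t) p * pdy v p))
      = -ε ^ 2 * (∫ p in unitSq,
          (pdx (lap (u t)) p * pdx v p + pdy (lap (u t)) p * pdy v p))
        + ∫ p in unitSq,
          (pdx (fun q => fDW (u t q)) p * pdx v p
            + pdy (fun q => fDW (u t q)) p * pdy v p) := by
    have hpt : ∀ p : ℝ × ℝ, pdx (w t) p * pdx v p + pdy (w t) p * pdy v p
        = -ε ^ 2 * (pdx (lap (u t)) p * pdx v p + pdy (lap (u t)) p * pdy v p)
          + (pdx (fun q => fDW (u t q)) p * pdx v p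
            + pdy (fun q => fDW (u t q)) p * pdy v p) := by
      intro p
      simp only [pdx, pdy]
      rw [hpdW (1,0) p, hpdW (0,1) p]
      ring
    rw [setIntegral_congr_fun hmU (fun p _ => hpt p), integral_add (Ic.const_mul _) Id,
      integral_const_mul _ _]
  -- Step 4: Green's identity for (v, lap (u t))
  have hG2 := green' hv hlapUc
  have Ie : IntegrableOn (fun p => lap v p * lap (u t) p) unitSq volume :=
    integrableOn_unitSq' ((contDiff_lap' hv).continuous.mul hlapUc.continuous)
  have Ic' : IntegrableOn
      (fun p => pdx v p * pdx (lap (u t)) p + pdy v p * pdy (lap (u t)) p) unitSq volume :=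
    integrableOn_unitSq'
      (((contDiff_pdx' hv).continuous.mul (contDiff_pdx' hlapUc).continuous).add
        ((contDiff_pdy' hv).continuous.mul (contDiff_pdy' hlapUc).continuous))
  rw [integral_add Ie Ic'] at hG2
  have hCsym : (∫ p in unitSq,
        (pdx v p * pdx (lap (u t)) p + pdy v p * pdy (lap (u t)) p))
      = ∫ p in unitSq, (pdx (lap (u t)) p * pdx v p + pdy (lap (u t)) p * pdy v p) :=
    setIntegral_congr_fun hmU (fun p _ => by ring)
  have hEsym : (∫ p in unitSq, lap v p * lap (u t) p)
      = ∫ p in unitSq, lap (u t) p * lap v p :=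
    setIntegral_congr_fun hmU (fun p _ => by ring)
  -- Step 5: simplify a1
  have ha1 : a1 γ (u t) v = (∫ p in unitSq, lap (u t) p * lap v p)
      - bInt (fun p => lap (u t) p * nder v p) := by
    unfold a1
    rw [bInt_nder_mul_zero (hbcu t ht), bInt_nder_mul_zero (hbcu t ht)]
    ring
  have e0 : ∫ y in Ioo (0:ℝ) 1, lap (u t) (0,y) * nder v (0,y)
      = -∫ y in Ioo (0:ℝ) 1, pdx v (0,y) * lap (u t) (0,y) := by
    rw [← integral_neg]
    exact setIntegral_congr_fun measurableSet_Ioo (fun y hy => by simp [nder]; ring)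
  have e1 : ∫ y in Ioo (0:ℝ) 1, lap (u t) (1,y) * nder v (1,y)
      = ∫ y in Ioo (0:ℝ) 1, pdx v (1,y) * lap (u t) (1,y) :=
    setIntegral_congr_fun measurableSet_Ioo (fun y hy => by simp [nder]; ring)
  have e2 : ∫ x in Ioo (0:ℝ) 1, lap (u t) (x,0) * nder v (x,0)
      = -∫ x in Ioo (0:ℝ) 1, pdy v (x,0) * lap (u t) (x,0) := by
    rw [← integral_neg]
    exact setIntegral_congr_fun measurableSet_Ioo (fun x hx => by
      simp [nder, ne_of_gt hx.1, ne_of_lt hx.2]; ring)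
  have e3 : ∫ x in Ioo (0:ℝ) 1, lap (u t) (x,1) * nder v (x,1)
      = ∫ x in Ioo (0:ℝ) 1, pdy v (x,1) * lap (u t) (x,1) :=
    setIntegral_congr_fun measurableSet_Ioo (fun x hx => by
      simp [nder, ne_of_gt hx.1, ne_of_lt hx.2]; ring)
  have hbb : bInt (fun p => lap (u t) p * nder v p)
      = (((∫ x in Ioo (0:ℝ) 1, pdy v (x,1) * lap (u t) (x,1))
            - ∫ x in Ioo (0:ℝ) 1, pdy v (x,0) * lap (u t) (x,0))
          + ∫ y in Ioo (0:ℝ) 1, pdx v (1,y) * lap (u t) (1,y))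
        - ∫ y in Ioo (0:ℝ) 1, pdx v (0,y) * lap (u t) (0,y) := by
    unfold bInt
    rw [e0, e1, e2, e3]
    ring
  rw [hstep1, ha1, hbb]
  linear_combination hG1 - hgradsplit + ε ^ 2 * hG2 - ε ^ 2 * hCsym - ε ^ 2 * hEsym
end

section
/- Let ε > 0, T > 0 and γ > 0. Suppose u : ℝ × ℝ² → ℝ is such that u(t,·) is four times continuously differentiable on a neighborhood of the closure of Ω for each t and ∂ₜu is continuous, and suppose that for every t ∈ [0,T] and every infinitely differentiable v : ℝ² → ℝ one has ∫_Ω ∂ₜu v dx + ε² a₁(u(t,·), v) + ∫_Ω ∇f(u(t,·)) · ∇v dx = 0. Then for every t ∈ [0,T], u satisfies the Cahn–Hilliard equation ∂ₜu + ε²Δ²u − Δf(u) = 0 at every point of Ω, and moreover ∂ₙu = 0 and ∂ₙ( −ε²Δu + f(u) ) = 0 at every point of the four open edges of ∂Ω. -/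
open MeasureTheory Set

open scoped ContDiff

lemma isOpen_unitSq : IsOpen unitSq := (isOpen_Ioo).prod isOpen_Ioo

lemma closure_unitSq : closure unitSq = Icc ((0:ℝ),(0:ℝ)) (1,1) := by
  rw [unitSq, closure_prod_eq, Icc_prod_eq, closure_Ioo (by norm_num : (0:ℝ) ≠ 1)]

lemma isCompact_closure_unitSq : IsCompact (closure unitSq) := by
  rw [closure_unitSq]; exact isCompact_Icc

lemma unitSq_ae_Icc : unitSq =ᵐ[volume] (Icc ((0:ℝ),(0:ℝ)) (1,1)) := by
  rw [← closure_unitSq]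
  rw [MeasureTheory.ae_eq_set]
  constructor
  · rw [diff_eq_empty.2 subset_closure]; simp
  · rw [← isOpen_unitSq.frontier_eq]
    exact (convex_Ioo (0:ℝ) 1 |>.prod (convex_Ioo 0 1)).addHaar_frontier volume

/-- integrability helper -/
lemma ion2 {f : ℝ × ℝ → ℝ} (hf : ContinuousOn f (closure unitSq)) :
    IntegrableOn f unitSq volume :=
  (hf.integrableOn_compact isCompact_closure_unitSq).mono_set subset_closure

lemma ion1 {f : ℝ → ℝ} (hf : ContinuousOn f (Icc (0:ℝ) 1)) :
    IntegrableOn f (Ioo (0:ℝ) 1) volume :=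
  (hf.integrableOn_compact isCompact_Icc).mono_set Ioo_subset_Icc_self

lemma iZero {f : ℝ → ℝ} (h : ∀ y ∈ Ioo (0:ℝ) 1, f y = 0) :
    ∫ y in Ioo (0:ℝ) 1, f y = 0 := by
  rw [setIntegral_congr_fun measurableSet_Ioo (g := fun _ => (0:ℝ)) h]
  simp

lemma iCongr {f g : ℝ → ℝ} (h : ∀ y ∈ Ioo (0:ℝ) 1, f y = g y) :
    ∫ y in Ioo (0:ℝ) 1, f y = ∫ y in Ioo (0:ℝ) 1, g y :=
  setIntegral_congr_fun measurableSet_Ioo h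

section contdiffat
variable {φ : ℝ × ℝ → ℝ} {p : ℝ × ℝ} {n : ℕ}

lemma contDiffAt_pdx (h : ContDiffAt ℝ (n+1) φ p) : ContDiffAt ℝ n (pdx φ) p := by
  have h1 : ContDiffAt ℝ n (fderiv ℝ φ) p := h.fderiv_right (by norm_cast)
  exact h1.clm_apply contDiffAt_const

lemma contDiffAt_pdy (h : ContDiffAt ℝ (n+1) φ p) : ContDiffAt ℝ n (pdy φ) p := by
  have h1 : ContDiffAt ℝ n (fderiv ℝ φ) p := h.fderiv_right (by norm_cast)
  exact h1.clm_apply contDiffAt_const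

lemma contDiffAt_lap (h : ContDiffAt ℝ (n+2) φ p) : ContDiffAt ℝ n (lap φ) p := by
  have hx : ContDiffAt ℝ n (pdx (pdx φ)) p := contDiffAt_pdx (contDiffAt_pdx h)
  have hy : ContDiffAt ℝ n (pdy (pdy φ)) p := contDiffAt_pdy (contDiffAt_pdy h)
  exact hx.add hy

end contdiffat


lemma fundCV {E : Type*} [NormedAddCommGroup E] [NormedSpace ℝ E] [FiniteDimensional ℝ E]
    [MeasurableSpace E] [BorelSpace E] (μ : Measure E) [μ.IsAddHaarMeasure] {U : Set E}
    (hU : IsOpen U) {G : E → ℝ} (hc : ContinuousOn G U)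
    (hz : ∀ g : E → ℝ, ContDiff ℝ (⊤ : ℕ∞) g → HasCompactSupport g → tsupport g ⊆ U →
      ∫ p in U, G p * g p ∂μ = 0) :
    ∀ p ∈ U, G p = 0 := by
  have hae : ∀ᵐ x ∂μ, x ∈ U → G x = 0 := by
    refine hU.ae_eq_zero_of_integral_contDiff_smul_eq_zero
      (hc.locallyIntegrableOn hU.measurableSet) ?_
    intro g hg hgs hgt
    have h1 : ∀ x, x ∉ U → g x • G x = 0 := by
      intro x hx
      have : g x = 0 := image_eq_zero_of_notMem_tsupport (fun hmem => hx (hgt hmem))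
      simp [this]
    rw [← setIntegral_eq_integral_of_forall_compl_eq_zero h1]
    rw [setIntegral_congr_fun hU.measurableSet (g := fun p => G p * g p)
      (fun p _ => by simp [smul_eq_mul, mul_comm])]
    exact hz g hg hgs hgt
  intro p hp
  by_contra hGp
  have hca : ContinuousAt G p := hc.continuousAt (hU.mem_nhds hp)
  have hev : ∀ᶠ x in nhds p, G x ≠ 0 := hca.eventually_ne hGp
  have hW : {x | G x ≠ 0} ∩ U ∈ nhds p := Filter.inter_mem hev (hU.mem_nhds hp)
  obtain ⟨V, hVsub, hVopen, hpV⟩ := mem_nhds_iff.mp hW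
  have hpos : 0 < μ V := hVopen.measure_pos μ ⟨p, hpV⟩
  have hnull : μ {x | ¬(x ∈ U → G x = 0)} = 0 := by
    simpa [ae_iff] using hae
  have hVsub' : V ⊆ {x | ¬(x ∈ U → G x = 0)} := by
    intro x hx
    have := hVsub hx
    simp only [mem_setOf_eq, Classical.not_imp]
    exact ⟨this.2, this.1⟩
  exact absurd (measure_mono_null hVsub' hnull) hpos.ne'


section prodfun
variable {a b : ℝ → ℝ}

lemma contDiff_prodfun (ha : ContDiff ℝ ∞ a) (hb : ContDiff ℝ ∞ b) :
    ContDiff ℝ ∞ (fun p : ℝ × ℝ => a p.1 * b p.2) :=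
  (ha.comp contDiff_fst).mul (hb.comp contDiff_snd)

lemma pdx_prodfun (ha : ContDiff ℝ ∞ a) (hb : ContDiff ℝ ∞ b) :
    pdx (fun p : ℝ × ℝ => a p.1 * b p.2) = fun p => deriv a p.1 * b p.2 := by
  funext p
  obtain ⟨x, y⟩ := p
  have h1 : HasFDerivAt (fun p : ℝ × ℝ => a p.1)
      ((deriv a x) • ContinuousLinearMap.fst ℝ ℝ ℝ) (x, y) :=
    ((ha.differentiable (by simp) x).hasDerivAt).comp_hasFDerivAt (x, y) hasFDerivAt_fst
  have h2 : HasFDerivAt (fun p : ℝ × ℝ => b p.2)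
      ((deriv b y) • ContinuousLinearMap.snd ℝ ℝ ℝ) (x, y) :=
    ((hb.differentiable (by simp) y).hasDerivAt).comp_hasFDerivAt (x, y) hasFDerivAt_snd
  have H := h1.fun_mul h2
  rw [pdx, H.fderiv]
  simp [mul_comm]

lemma pdy_prodfun (ha : ContDiff ℝ ∞ a) (hb : ContDiff ℝ ∞ b) :
    pdy (fun p : ℝ × ℝ => a p.1 * b p.2) = fun p => a p.1 * deriv b p.2 := by
  funext p
  obtain ⟨x, y⟩ := p
  have h1 : HasFDerivAt (fun p : ℝ × ℝ => a p.1)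
      ((deriv a x) • ContinuousLinearMap.fst ℝ ℝ ℝ) (x, y) :=
    ((ha.differentiable (by simp) x).hasDerivAt).comp_hasFDerivAt (x, y) hasFDerivAt_fst
  have h2 : HasFDerivAt (fun p : ℝ × ℝ => b p.2)
      ((deriv b y) • ContinuousLinearMap.snd ℝ ℝ ℝ) (x, y) :=
    ((hb.differentiable (by simp) y).hasDerivAt).comp_hasFDerivAt (x, y) hasFDerivAt_snd
  have H := h1.fun_mul h2
  rw [pdy, H.fderiv]
  simp

lemma lap_prodfun (ha : ContDiff ℝ ∞ a) (hb : ContDiff ℝ ∞ b) (p : ℝ × ℝ) :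
    lap (fun p : ℝ × ℝ => a p.1 * b p.2) p
      = deriv (deriv a) p.1 * b p.2 + a p.1 * deriv (deriv b) p.2 := by
  have hda : ContDiff ℝ ∞ (deriv a) := (contDiff_infty_iff_deriv.mp ha).2
  have hdb : ContDiff ℝ ∞ (deriv b) := (contDiff_infty_iff_deriv.mp hb).2
  rw [lap, pdx_prodfun ha hb, pdy_prodfun ha hb, pdx_prodfun hda hb, pdy_prodfun ha hdb]

end prodfun

section eventually
variable {f g : ℝ → ℝ} {z : ℝ}

lemma ev_facts (h : f =ᶠ[nhds z] g) :
    f z = g z ∧ deriv f z = deriv g z ∧ deriv (deriv f) z = deriv (deriv g) z :=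
  ⟨h.eq_of_nhds, h.deriv_eq, (h.deriv).deriv_eq⟩

end eventually

/-- smooth cutoff: 1 on `(-∞, 1/4]`, 0 on `[1/2, ∞)` -/
noncomputable def cutρ (x : ℝ) : ℝ := 1 - Real.smoothTransition (4 * x - 1)

lemma contDiff_cutρ : ContDiff ℝ ∞ cutρ :=
  contDiff_const.sub (Real.smoothTransition.contDiff.comp
    ((contDiff_const.mul contDiff_id).sub contDiff_const))

lemma cutρ_one {x : ℝ} (h : x ≤ 1/4) : cutρ x = 1 := by
  rw [cutρ, Real.smoothTransition.zero_of_nonpos (by linarith)]; ring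

lemma cutρ_zero {x : ℝ} (h : 1/2 ≤ x) : cutρ x = 0 := by
  rw [cutρ, Real.smoothTransition.one_of_one_le (by linarith)]; ring

/-- `η₁` : 0-end cutoff, equal to `x` near 0, 0 near 1. -/
noncomputable def eta1 (x : ℝ) : ℝ := x * cutρ x
/-- `η₂` : 0-end cutoff, equal to `1` near 0, 0 near 1. -/
noncomputable def eta2 (x : ℝ) : ℝ := cutρ x
/-- `η₁r` : 1-end cutoff, equal to `x - 1` near 1, 0 near 0. -/
noncomputable def eta1r (x : ℝ) : ℝ := (x - 1) * cutρ (1 - x)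
/-- `η₂r` : 1-end cutoff, equal to `1` near 1, 0 near 0. -/
noncomputable def eta2r (x : ℝ) : ℝ := cutρ (1 - x)

lemma contDiff_eta1 : ContDiff ℝ ∞ eta1 := contDiff_id.mul contDiff_cutρ
lemma contDiff_eta2 : ContDiff ℝ ∞ eta2 := contDiff_cutρ
lemma contDiff_eta1r : ContDiff ℝ ∞ eta1r :=
  (contDiff_id.sub contDiff_const).mul (contDiff_cutρ.comp (contDiff_const.sub contDiff_id))
lemma contDiff_eta2r : ContDiff ℝ ∞ eta2r :=
  contDiff_cutρ.comp (contDiff_const.sub contDiff_id)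

lemma eta1_at0 : eta1 0 = 0 ∧ deriv eta1 0 = 1 ∧ deriv (deriv eta1) 0 = 0 := by
  have h : eta1 =ᶠ[nhds (0:ℝ)] (fun x => x) := by
    filter_upwards [Ioo_mem_nhds (by norm_num : (-1/4:ℝ) < 0) (by norm_num : (0:ℝ) < 1/4)]
      with x hx
    rw [eta1, cutρ_one hx.2.le, mul_one]
  obtain ⟨h0, h1, h2⟩ := ev_facts h
  refine ⟨h0, ?_, ?_⟩
  · rw [h1, deriv_id'']
  · rw [h2]
    have : deriv (fun x : ℝ => x) = fun _ => (1:ℝ) := funext fun x => deriv_id x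
    rw [this, deriv_const]

lemma eta1_at1 : eta1 1 = 0 ∧ deriv eta1 1 = 0 ∧ deriv (deriv eta1) 1 = 0 := by
  have h : eta1 =ᶠ[nhds (1:ℝ)] (fun _ => (0:ℝ)) := by
    filter_upwards [Ioi_mem_nhds (by norm_num : (1/2:ℝ) < 1)] with x hx
    rw [eta1, cutρ_zero hx.le, mul_zero]
  obtain ⟨h0, h1, h2⟩ := ev_facts h
  exact ⟨h0, by rw [h1, deriv_const], by rw [h2]; simp⟩

lemma eta2_at0 : eta2 0 = 1 ∧ deriv eta2 0 = 0 ∧ deriv (deriv eta2) 0 = 0 := by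
  have h : eta2 =ᶠ[nhds (0:ℝ)] (fun _ => (1:ℝ)) := by
    filter_upwards [Iio_mem_nhds (by norm_num : (0:ℝ) < 1/4)] with x hx
    exact cutρ_one hx.le
  obtain ⟨h0, h1, h2⟩ := ev_facts h
  exact ⟨h0, by rw [h1, deriv_const], by rw [h2]; simp⟩

lemma eta2_at1 : eta2 1 = 0 ∧ deriv eta2 1 = 0 ∧ deriv (deriv eta2) 1 = 0 := by
  have h : eta2 =ᶠ[nhds (1:ℝ)] (fun _ => (0:ℝ)) := by
    filter_upwards [Ioi_mem_nhds (by norm_num : (1/2:ℝ) < 1)] with x hx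
    exact cutρ_zero hx.le
  obtain ⟨h0, h1, h2⟩ := ev_facts h
  exact ⟨h0, by rw [h1, deriv_const], by rw [h2]; simp⟩

lemma eta1r_at1 : eta1r 1 = 0 ∧ deriv eta1r 1 = 1 ∧ deriv (deriv eta1r) 1 = 0 := by
  have h : eta1r =ᶠ[nhds (1:ℝ)] (fun x => x - 1) := by
    filter_upwards [Ioi_mem_nhds (by norm_num : (3/4:ℝ) < 1)] with x hx
    have hx' : (3/4:ℝ) < x := hx
    rw [eta1r, cutρ_one (by linarith), mul_one]
  obtain ⟨h0, h1, h2⟩ := ev_facts h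
  refine ⟨by rw [h0]; ring, ?_, ?_⟩
  · rw [h1]
    simp [deriv_fun_sub (differentiableAt_fun_id (𝕜 := ℝ)) (differentiableAt_const _)]
  · rw [h2]
    have : deriv (fun x : ℝ => x - 1) = fun _ => (1:ℝ) := by
      funext x
      simp [deriv_fun_sub (differentiableAt_fun_id (𝕜 := ℝ)) (differentiableAt_const _)]
    rw [this, deriv_const]

lemma eta1r_at0 : eta1r 0 = 0 ∧ deriv eta1r 0 = 0 ∧ deriv (deriv eta1r) 0 = 0 := by
  have h : eta1r =ᶠ[nhds (0:ℝ)] (fun _ => (0:ℝ)) := by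
    filter_upwards [Iio_mem_nhds (by norm_num : (0:ℝ) < 1/2)] with x hx
    have hx' : x < (1/2:ℝ) := hx
    rw [eta1r, cutρ_zero (by linarith), mul_zero]
  obtain ⟨h0, h1, h2⟩ := ev_facts h
  exact ⟨h0, by rw [h1, deriv_const], by rw [h2]; simp⟩

lemma eta2r_at1 : eta2r 1 = 1 ∧ deriv eta2r 1 = 0 ∧ deriv (deriv eta2r) 1 = 0 := by
  have h : eta2r =ᶠ[nhds (1:ℝ)] (fun _ => (1:ℝ)) := by
    filter_upwards [Ioi_mem_nhds (by norm_num : (3/4:ℝ) < 1)] with x hx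
    have hx' : (3/4:ℝ) < x := hx
    exact cutρ_one (by linarith)
  obtain ⟨h0, h1, h2⟩ := ev_facts h
  exact ⟨h0, by rw [h1, deriv_const], by rw [h2]; simp⟩

lemma eta2r_at0 : eta2r 0 = 0 ∧ deriv eta2r 0 = 0 ∧ deriv (deriv eta2r) 0 = 0 := by
  have h : eta2r =ᶠ[nhds (0:ℝ)] (fun _ => (0:ℝ)) := by
    filter_upwards [Iio_mem_nhds (by norm_num : (0:ℝ) < 1/2)] with x hx
    have hx' : x < (1/2:ℝ) := hx
    exact cutρ_zero (by linarith)
  obtain ⟨h0, h1, h2⟩ := ev_facts h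
  exact ⟨h0, by rw [h1, deriv_const], by rw [h2]; simp⟩

/-- a compactly supported function in `Ioo 0 1` vanishes to second order at `0` and `1`. -/
lemma tsupport_facts {χ : ℝ → ℝ} (hχ : tsupport χ ⊆ Ioo (0:ℝ) 1) :
    ∀ z : ℝ, z ∉ Ioo (0:ℝ) 1 → χ z = 0 ∧ deriv χ z = 0 ∧ deriv (deriv χ) z = 0 := by
  set W := (tsupport χ)ᶜ with hW
  have hWo : IsOpen W := (isClosed_tsupport χ).isOpen_compl
  have hmem : ∀ z : ℝ, z ∉ Ioo (0:ℝ) 1 → z ∈ W := fun z hz hmem => hz (hχ hmem)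
  have h0 : ∀ w ∈ W, χ w = 0 := fun w hw => image_eq_zero_of_notMem_tsupport hw
  have h1 : ∀ w ∈ W, deriv χ w = 0 := by
    intro w hw
    have he : χ =ᶠ[nhds w] (fun _ => (0:ℝ)) :=
      Filter.eventually_of_mem (hWo.mem_nhds hw) h0
    rw [he.deriv_eq, deriv_const]
  have h2 : ∀ w ∈ W, deriv (deriv χ) w = 0 := by
    intro w hw
    have he : deriv χ =ᶠ[nhds w] (fun _ => (0:ℝ)) :=
      Filter.eventually_of_mem (hWo.mem_nhds hw) h1
    rw [he.deriv_eq, deriv_const]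
  exact fun z hz => ⟨h0 z (hmem z hz), h1 z (hmem z hz), h2 z (hmem z hz)⟩


lemma green {s : Set (ℝ × ℝ)} (hs : IsOpen s) (hcl : closure unitSq ⊆ s)
    {φ ψ : ℝ × ℝ → ℝ}
    (hφ : ∀ p ∈ s, ContDiffAt ℝ 2 φ p) (hψ : ∀ p ∈ s, ContDiffAt ℝ 1 ψ p) :
    (∫ p in unitSq, (pdx φ p * pdx ψ p + pdy φ p * pdy ψ p))
      + (∫ p in unitSq, lap φ p * ψ p)
      = bInt (fun p => nder φ p * ψ p) := by
  set A := fun p : ℝ × ℝ => pdx φ p * ψ p with hA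
  set B := fun p : ℝ × ℝ => pdy φ p * ψ p with hB
  -- regularity facts
  have hφ2 : ∀ p ∈ s, ContDiffAt ℝ ((1:ℕ)+1) φ p := by
    intro p hp; have := hφ p hp; exact_mod_cast this
  have hdψ : ∀ p ∈ s, DifferentiableAt ℝ ψ p := fun p hp =>
    (hψ p hp).differentiableAt (by norm_cast)
  have hdφx : ∀ p ∈ s, DifferentiableAt ℝ (pdx φ) p := fun p hp =>
    (contDiffAt_pdx (n := 1) (hφ2 p hp)).differentiableAt (by norm_cast)
  have hdφy : ∀ p ∈ s, DifferentiableAt ℝ (pdy φ) p := fun p hp =>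
    (contDiffAt_pdy (n := 1) (hφ2 p hp)).differentiableAt (by norm_cast)
  have hA' : ∀ p ∈ s, HasFDerivAt A
      (pdx φ p • fderiv ℝ ψ p + ψ p • fderiv ℝ (pdx φ) p) p := fun p hp =>
    ((hdφx p hp).hasFDerivAt).mul ((hdψ p hp).hasFDerivAt)
  have hB' : ∀ p ∈ s, HasFDerivAt B
      (pdy φ p • fderiv ℝ ψ p + ψ p • fderiv ℝ (pdy φ) p) p := fun p hp =>
    ((hdφy p hp).hasFDerivAt).mul ((hdψ p hp).hasFDerivAt)
  have hAval : ∀ p ∈ s, fderiv ℝ A p (1,0) = pdx φ p * pdx ψ p + ψ p * pdx (pdx φ) p := by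
    intro p hp
    rw [(hA' p hp).fderiv]
    simp [pdx, smul_eq_mul]
  have hBval : ∀ p ∈ s, fderiv ℝ B p (0,1) = pdy φ p * pdy ψ p + ψ p * pdy (pdy φ) p := by
    intro p hp
    rw [(hB' p hp).fderiv]
    simp [pdy, smul_eq_mul]
  -- continuity facts
  have hcψ : ContinuousOn ψ s := fun p hp => ((hψ p hp).continuousAt).continuousWithinAt
  have hcφx : ContinuousOn (pdx φ) s := fun p hp =>
    ((contDiffAt_pdx (n := 1) (hφ2 p hp)).continuousAt).continuousWithinAt
  have hcφy : ContinuousOn (pdy φ) s := fun p hp =>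
    ((contDiffAt_pdy (n := 1) (hφ2 p hp)).continuousAt).continuousWithinAt
  have hcφxx : ContinuousOn (pdx (pdx φ)) s := fun p hp =>
    (((contDiffAt_pdx (n := 0) (contDiffAt_pdx (n := 1) (hφ2 p hp)))).continuousAt).continuousWithinAt
  have hcφyy : ContinuousOn (pdy (pdy φ)) s := fun p hp =>
    (((contDiffAt_pdy (n := 0) (contDiffAt_pdy (n := 1) (hφ2 p hp)))).continuousAt).continuousWithinAt
  have hcψs : ContinuousOn (pdx ψ) s := fun p hp =>
    (((contDiffAt_pdx (n := 0) (by exact_mod_cast hψ p hp))).continuousAt).continuousWithinAt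
  have hcψy : ContinuousOn (pdy ψ) s := fun p hp =>
    (((contDiffAt_pdy (n := 0) (by exact_mod_cast hψ p hp))).continuousAt).continuousWithinAt
  have hIccs : Icc ((0:ℝ),(0:ℝ)) (1,1) ⊆ s := by rw [← closure_unitSq]; exact hcl
  set g₀ := fun p : ℝ × ℝ => (pdx φ p * pdx ψ p + pdy φ p * pdy ψ p) + lap φ p * ψ p with hg₀
  have hcg₀ : ContinuousOn g₀ s := by
    simp only [hg₀, lap]
    exact ((hcφx.mul hcψs).add (hcφy.mul hcψy)).add ((hcφxx.add hcφyy).mul hcψ)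
  have heq : ∀ p ∈ Icc ((0:ℝ),(0:ℝ)) (1,1),
      fderiv ℝ A p (1,0) + fderiv ℝ B p (0,1) = g₀ p := by
    intro p hp
    rw [hAval p (hIccs hp), hBval p (hIccs hp)]
    simp only [hg₀, lap]; ring
  have Hi : IntegrableOn (fun x => fderiv ℝ A x (1,0) + fderiv ℝ B x (0,1))
      (Icc ((0:ℝ),(0:ℝ)) (1,1)) volume := by
    refine ((hcg₀.mono hIccs).integrableOn_compact isCompact_Icc).congr_fun ?_ measurableSet_Icc
    exact fun p hp => (heq p hp).symm
  have hmemU : ∀ x, x ∈ Ioo ((0:ℝ),(0:ℝ)).1 ((1:ℝ),(1:ℝ)).1 ×ˢ Ioo ((0:ℝ),(0:ℝ)).2 ((1:ℝ),(1:ℝ)).2 \ (∅ : Set (ℝ × ℝ)) → x ∈ s := by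
    intro x hx
    exact hcl (subset_closure (by simpa [unitSq] using hx.1))
  have key := integral_divergence_prod_Icc_of_hasFDerivAt_off_countable_of_le A B
    (fun p => fderiv ℝ A p) (fun p => fderiv ℝ B p) ((0:ℝ),(0:ℝ)) (1,1)
    (by simp) ∅ countable_empty
    ((hcφx.mul hcψ).mono hIccs) ((hcφy.mul hcψ).mono hIccs)
    (fun x hx => ((hA' x (hmemU x hx)).differentiableAt).hasFDerivAt)
    (fun x hx => ((hB' x (hmemU x hx)).differentiableAt).hasFDerivAt)
    Hi
  -- rewrite the LHS of key
  have hL1 : (∫ x in Icc ((0:ℝ),(0:ℝ)) (1,1), (fderiv ℝ A x (1,0) + fderiv ℝ B x (0,1)))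
      = ∫ p in unitSq, g₀ p := by
    rw [setIntegral_congr_fun measurableSet_Icc heq]
    exact (setIntegral_congr_set unitSq_ae_Icc).symm
  have hint1 : IntegrableOn (fun p => pdx φ p * pdx ψ p + pdy φ p * pdy ψ p) unitSq volume :=
    ion2 ((((hcφx.mul hcψs).add (hcφy.mul hcψy))).mono hcl)
  have hclap : ContinuousOn (fun p => lap φ p * ψ p) s := by
    simp only [lap]
    exact (hcφxx.add hcφyy).mul hcψ
  have hint2 : IntegrableOn (fun p => lap φ p * ψ p) unitSq volume :=
    ion2 (hclap.mono hcl)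
  have hL2 : (∫ p in unitSq, g₀ p)
      = (∫ p in unitSq, (pdx φ p * pdx ψ p + pdy φ p * pdy ψ p))
        + (∫ p in unitSq, lap φ p * ψ p) := by
    simp only [hg₀]
    exact integral_add hint1 hint2
  -- rewrite the RHS of key : interval integrals → Ioo integrals
  have e1 : ∀ f : ℝ → ℝ, (∫ x in (0:ℝ)..1, f x) = ∫ x in Ioo (0:ℝ) 1, f x := by
    intro f
    rw [intervalIntegral.integral_of_le zero_le_one, integral_Ioc_eq_integral_Ioo]
  rw [hL1, hL2, e1, e1, e1, e1] at key
  rw [key, bInt]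
  -- identify the four boundary integrals
  have h0 : (∫ y in Ioo (0:ℝ) 1, nder φ (0, y) * ψ (0, y)) = - ∫ y in Ioo (0:ℝ) 1, A (0, y) := by
    rw [← integral_neg]
    refine iCongr fun y hy => ?_
    simp [nder, hA]
  have h1 : (∫ y in Ioo (0:ℝ) 1, nder φ (1, y) * ψ (1, y)) = ∫ y in Ioo (0:ℝ) 1, A (1, y) := by
    refine iCongr fun y hy => ?_
    simp [nder, hA]
  have h2 : (∫ x in Ioo (0:ℝ) 1, nder φ (x, 0) * ψ (x, 0)) = - ∫ x in Ioo (0:ℝ) 1, B (x, 0) := by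
    rw [← integral_neg]
    refine iCongr fun x hx => ?_
    simp [nder, hB, hx.1.ne', hx.2.ne]
  have h3 : (∫ x in Ioo (0:ℝ) 1, nder φ (x, 1) * ψ (x, 1)) = ∫ x in Ioo (0:ℝ) 1, B (x, 1) := by
    refine iCongr fun x hx => ?_
    simp [nder, hB, hx.1.ne', hx.2.ne]
  rw [h0, h1, h2, h3]
  ring


lemma bInt_eq_single0 {g : ℝ × ℝ → ℝ} {h : ℝ → ℝ}
    (h0 : ∀ y ∈ Ioo (0:ℝ) 1, g (0, y) = h y)
    (h1 : ∀ y ∈ Ioo (0:ℝ) 1, g (1, y) = 0)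
    (h2 : ∀ x ∈ Ioo (0:ℝ) 1, g (x, 0) = 0)
    (h3 : ∀ x ∈ Ioo (0:ℝ) 1, g (x, 1) = 0) :
    bInt g = ∫ y in Ioo (0:ℝ) 1, h y := by
  rw [bInt, iCongr h0, iZero h1, iZero h2, iZero h3]; ring

lemma bInt_eq_single1 {g : ℝ × ℝ → ℝ} {h : ℝ → ℝ}
    (h0 : ∀ y ∈ Ioo (0:ℝ) 1, g (0, y) = 0)
    (h1 : ∀ y ∈ Ioo (0:ℝ) 1, g (1, y) = h y)
    (h2 : ∀ x ∈ Ioo (0:ℝ) 1, g (x, 0) = 0)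
    (h3 : ∀ x ∈ Ioo (0:ℝ) 1, g (x, 1) = 0) :
    bInt g = ∫ y in Ioo (0:ℝ) 1, h y := by
  rw [bInt, iZero h0, iCongr h1, iZero h2, iZero h3]; ring

lemma bInt_eq_single2 {g : ℝ × ℝ → ℝ} {h : ℝ → ℝ}
    (h0 : ∀ y ∈ Ioo (0:ℝ) 1, g (0, y) = 0)
    (h1 : ∀ y ∈ Ioo (0:ℝ) 1, g (1, y) = 0)
    (h2 : ∀ x ∈ Ioo (0:ℝ) 1, g (x, 0) = h x)
    (h3 : ∀ x ∈ Ioo (0:ℝ) 1, g (x, 1) = 0) :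
    bInt g = ∫ x in Ioo (0:ℝ) 1, h x := by
  rw [bInt, iZero h0, iZero h1, iCongr h2, iZero h3]; ring

lemma bInt_eq_single3 {g : ℝ × ℝ → ℝ} {h : ℝ → ℝ}
    (h0 : ∀ y ∈ Ioo (0:ℝ) 1, g (0, y) = 0)
    (h1 : ∀ y ∈ Ioo (0:ℝ) 1, g (1, y) = 0)
    (h2 : ∀ x ∈ Ioo (0:ℝ) 1, g (x, 0) = 0)
    (h3 : ∀ x ∈ Ioo (0:ℝ) 1, g (x, 1) = h x) :
    bInt g = ∫ x in Ioo (0:ℝ) 1, h x := by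
  rw [bInt, iZero h0, iZero h1, iZero h2, iCongr h3]; ring

lemma bInt_zero {g : ℝ × ℝ → ℝ}
    (h0 : ∀ y ∈ Ioo (0:ℝ) 1, g (0, y) = 0)
    (h1 : ∀ y ∈ Ioo (0:ℝ) 1, g (1, y) = 0)
    (h2 : ∀ x ∈ Ioo (0:ℝ) 1, g (x, 0) = 0)
    (h3 : ∀ x ∈ Ioo (0:ℝ) 1, g (x, 1) = 0) :
    bInt g = 0 := by
  rw [bInt, iZero h0, iZero h1, iZero h2, iZero h3]; ring

lemma ion1' {f χ : ℝ → ℝ} (hf : ContinuousOn f (Ioo (0:ℝ) 1)) (hχc : Continuous χ)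
    (hχs : HasCompactSupport χ) (hχt : tsupport χ ⊆ Ioo (0:ℝ) 1) :
    IntegrableOn (fun x => f x * χ x) (Ioo (0:ℝ) 1) volume := by
  set K := tsupport χ with hK
  have hKc : IsCompact K := hχs
  have hKm : MeasurableSet K := hKc.isClosed.measurableSet
  have h1 : IntegrableOn (fun x => f x * χ x) K volume :=
    ((hf.mono hχt).mul hχc.continuousOn).integrableOn_compact hKc
  have h2 : IntegrableOn (fun x => f x * χ x) (Ioo (0:ℝ) 1 \ K) volume := by
    have : IntegrableOn (fun _ : ℝ => (0:ℝ)) (Ioo (0:ℝ) 1 \ K) volume := integrableOn_zero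
    refine this.congr_fun ?_ (measurableSet_Ioo.diff hKm)
    intro x hx
    simp [image_eq_zero_of_notMem_tsupport hx.2]
  exact (h1.union h2).mono_set (fun x hx => by
    by_cases hxK : x ∈ K
    · exact Or.inl hxK
    · exact Or.inr ⟨hx, hxK⟩)


section edges
variable {ε γ : ℝ} {L N M : ℝ × ℝ → ℝ}

lemma verticalEdges (hε : ε ≠ 0) (hγ : γ ≠ 0)
    (hL0 : ContinuousOn (fun y => L (0, y)) (Ioo (0:ℝ) 1))
    (hL1 : ContinuousOn (fun y => L (1, y)) (Ioo (0:ℝ) 1))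
    (hN0 : ContinuousOn (fun y => N (0, y)) (Ioo (0:ℝ) 1))
    (hN1 : ContinuousOn (fun y => N (1, y)) (Ioo (0:ℝ) 1))
    (hM0 : ContinuousOn (fun y => M (0, y)) (Ioo (0:ℝ) 1))
    (hM1 : ContinuousOn (fun y => M (1, y)) (Ioo (0:ℝ) 1))
    (hE : ∀ v : ℝ × ℝ → ℝ, ContDiff ℝ ∞ v →
      ε^2 * (-(bInt fun p => L p * v p) - (bInt fun p => N p * lap v p)
        + γ * (bInt fun p => N p * nder v p)) + (bInt fun p => M p * v p) = 0) :
    (∀ y ∈ Ioo (0:ℝ) 1, N (0, y) = 0) ∧ (∀ y ∈ Ioo (0:ℝ) 1, N (1, y) = 0) ∧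
    (∀ y ∈ Ioo (0:ℝ) 1, M (0, y) - ε^2 * L (0, y) = 0) ∧
    (∀ y ∈ Ioo (0:ℝ) 1, M (1, y) - ε^2 * L (1, y) = 0) := by
  have hIooIcc : Ioo (0:ℝ) 1 ⊆ Icc (0:ℝ) 1 := Ioo_subset_Icc_self
  have h0mem : (0:ℝ) ∉ Ioo (0:ℝ) 1 := by simp
  have h1mem : (1:ℝ) ∉ Ioo (0:ℝ) 1 := by simp
  have hne : ε^2 * γ ≠ 0 := mul_ne_zero (pow_ne_zero 2 hε) hγ
  -- ================= stage 1, left edge =================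
  have stage1L : ∀ y ∈ Ioo (0:ℝ) 1, N (0, y) = 0 := by
    refine fundCV volume isOpen_Ioo (hN0) ?_
    intro χ hχ hχc hχt
    obtain ⟨c00, c01, c02⟩ := tsupport_facts hχt 0 h0mem
    obtain ⟨c10, c11, c12⟩ := tsupport_facts hχt 1 h1mem
    have hEv := hE (fun p => eta1 p.1 * χ p.2) (contDiff_prodfun contDiff_eta1 hχ)
    beta_reduce at hEv
    have hb1 : bInt (fun p => L p * (eta1 p.1 * χ p.2)) = 0 :=
      bInt_zero (fun y hy => by simp [eta1_at0.1]) (fun y hy => by simp [eta1_at1.1])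
        (fun x hx => by simp [c00]) (fun x hx => by simp [c10])
    have hb4 : bInt (fun p => M p * (eta1 p.1 * χ p.2)) = 0 :=
      bInt_zero (fun y hy => by simp [eta1_at0.1]) (fun y hy => by simp [eta1_at1.1])
        (fun x hx => by simp [c00]) (fun x hx => by simp [c10])
    have hb2 : bInt (fun p => N p * lap (fun p : ℝ × ℝ => eta1 p.1 * χ p.2) p) = 0 :=
      bInt_zero
        (fun y hy => by simp [lap_prodfun contDiff_eta1 hχ, eta1_at0.1, eta1_at0.2.2])
        (fun y hy => by simp [lap_prodfun contDiff_eta1 hχ, eta1_at1.1, eta1_at1.2.2])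
        (fun x hx => by simp [lap_prodfun contDiff_eta1 hχ, c00, c02])
        (fun x hx => by simp [lap_prodfun contDiff_eta1 hχ, c10, c12])
    have hb3 : bInt (fun p => N p * nder (fun p : ℝ × ℝ => eta1 p.1 * χ p.2) p)
        = - ∫ y in Ioo (0:ℝ) 1, N (0, y) * χ y := by
      rw [← integral_neg]
      refine bInt_eq_single0
        (fun y hy => by simp [nder, pdx_prodfun contDiff_eta1 hχ, eta1_at0.2.1])
        (fun y hy => by simp [nder, pdx_prodfun contDiff_eta1 hχ, eta1_at1.2.1])
        (fun x hx => by simp [nder, hx.1.ne', hx.2.ne, pdy_prodfun contDiff_eta1 hχ, c01])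
        (fun x hx => by simp [nder, hx.1.ne', hx.2.ne, pdy_prodfun contDiff_eta1 hχ, c11])
    rw [hb1, hb2, hb3, hb4] at hEv
    have hkey : (ε^2 * γ) * ∫ y in Ioo (0:ℝ) 1, N (0, y) * χ y = 0 := by
      ring_nf; ring_nf at hEv; linarith
    have := (mul_eq_zero.mp hkey).resolve_left hne
    simpa using this
  -- ================= stage 1, right edge =================
  have stage1R : ∀ y ∈ Ioo (0:ℝ) 1, N (1, y) = 0 := by
    refine fundCV volume isOpen_Ioo (hN1) ?_
    intro χ hχ hχc hχt
    obtain ⟨c00, c01, c02⟩ := tsupport_facts hχt 0 h0mem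
    obtain ⟨c10, c11, c12⟩ := tsupport_facts hχt 1 h1mem
    have hEv := hE (fun p => eta1r p.1 * χ p.2) (contDiff_prodfun contDiff_eta1r hχ)
    beta_reduce at hEv
    have hb1 : bInt (fun p => L p * (eta1r p.1 * χ p.2)) = 0 :=
      bInt_zero (fun y hy => by simp [eta1r_at0.1]) (fun y hy => by simp [eta1r_at1.1])
        (fun x hx => by simp [c00]) (fun x hx => by simp [c10])
    have hb4 : bInt (fun p => M p * (eta1r p.1 * χ p.2)) = 0 :=
      bInt_zero (fun y hy => by simp [eta1r_at0.1]) (fun y hy => by simp [eta1r_at1.1])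
        (fun x hx => by simp [c00]) (fun x hx => by simp [c10])
    have hb2 : bInt (fun p => N p * lap (fun p : ℝ × ℝ => eta1r p.1 * χ p.2) p) = 0 :=
      bInt_zero
        (fun y hy => by simp [lap_prodfun contDiff_eta1r hχ, eta1r_at0.1, eta1r_at0.2.2])
        (fun y hy => by simp [lap_prodfun contDiff_eta1r hχ, eta1r_at1.1, eta1r_at1.2.2])
        (fun x hx => by simp [lap_prodfun contDiff_eta1r hχ, c00, c02])
        (fun x hx => by simp [lap_prodfun contDiff_eta1r hχ, c10, c12])
    have hb3 : bInt (fun p => N p * nder (fun p : ℝ × ℝ => eta1r p.1 * χ p.2) p)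
        = ∫ y in Ioo (0:ℝ) 1, N (1, y) * χ y :=
      bInt_eq_single1
        (fun y hy => by simp [nder, pdx_prodfun contDiff_eta1r hχ, eta1r_at0.2.1])
        (fun y hy => by simp [nder, pdx_prodfun contDiff_eta1r hχ, eta1r_at1.2.1])
        (fun x hx => by simp [nder, hx.1.ne', hx.2.ne, pdy_prodfun contDiff_eta1r hχ, c01])
        (fun x hx => by simp [nder, hx.1.ne', hx.2.ne, pdy_prodfun contDiff_eta1r hχ, c11])
    rw [hb1, hb2, hb3, hb4] at hEv
    have hkey : (ε^2 * γ) * ∫ y in Ioo (0:ℝ) 1, N (1, y) * χ y = 0 := by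
      ring_nf; ring_nf at hEv; linarith
    have := (mul_eq_zero.mp hkey).resolve_left hne
    simpa using this
  -- ================= stage 2, left edge =================
  have stage2L : ∀ y ∈ Ioo (0:ℝ) 1, M (0, y) - ε^2 * L (0, y) = 0 := by
    refine fundCV volume isOpen_Ioo
      ((hM0.sub (continuousOn_const.mul hL0))) ?_
    intro χ hχ hχc hχt
    obtain ⟨c00, c01, c02⟩ := tsupport_facts hχt 0 h0mem
    obtain ⟨c10, c11, c12⟩ := tsupport_facts hχt 1 h1mem
    have hEv := hE (fun p => eta2 p.1 * χ p.2) (contDiff_prodfun contDiff_eta2 hχ)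
    beta_reduce at hEv
    have hb1 : bInt (fun p => L p * (eta2 p.1 * χ p.2))
        = ∫ y in Ioo (0:ℝ) 1, L (0, y) * χ y :=
      bInt_eq_single0 (fun y hy => by simp [eta2_at0.1]) (fun y hy => by simp [eta2_at1.1])
        (fun x hx => by simp [c00]) (fun x hx => by simp [c10])
    have hb4 : bInt (fun p => M p * (eta2 p.1 * χ p.2))
        = ∫ y in Ioo (0:ℝ) 1, M (0, y) * χ y :=
      bInt_eq_single0 (fun y hy => by simp [eta2_at0.1]) (fun y hy => by simp [eta2_at1.1])
        (fun x hx => by simp [c00]) (fun x hx => by simp [c10])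
    have hb2 : bInt (fun p => N p * lap (fun p : ℝ × ℝ => eta2 p.1 * χ p.2) p) = 0 :=
      bInt_zero
        (fun y hy => by simp [stage1L y hy])
        (fun y hy => by simp [lap_prodfun contDiff_eta2 hχ, eta2_at1.1, eta2_at1.2.2])
        (fun x hx => by simp [lap_prodfun contDiff_eta2 hχ, c00, c02])
        (fun x hx => by simp [lap_prodfun contDiff_eta2 hχ, c10, c12])
    have hb3 : bInt (fun p => N p * nder (fun p : ℝ × ℝ => eta2 p.1 * χ p.2) p) = 0 :=
      bInt_zero
        (fun y hy => by simp [nder, pdx_prodfun contDiff_eta2 hχ, eta2_at0.2.1])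
        (fun y hy => by simp [nder, pdx_prodfun contDiff_eta2 hχ, eta2_at1.2.1])
        (fun x hx => by simp [nder, hx.1.ne', hx.2.ne, pdy_prodfun contDiff_eta2 hχ, c01])
        (fun x hx => by simp [nder, hx.1.ne', hx.2.ne, pdy_prodfun contDiff_eta2 hχ, c11])
    rw [hb1, hb2, hb3, hb4] at hEv
    have iM : IntegrableOn (fun y => M (0, y) * χ y) (Ioo (0:ℝ) 1) volume :=
      ion1' hM0 hχ.continuous hχc hχt
    have iL : IntegrableOn (fun y => L (0, y) * χ y) (Ioo (0:ℝ) 1) volume :=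
      ion1' hL0 hχ.continuous hχc hχt
    have hsplit : ∫ y in Ioo (0:ℝ) 1, (M (0, y) - ε^2 * L (0, y)) * χ y
        = (∫ y in Ioo (0:ℝ) 1, M (0, y) * χ y)
          - ε^2 * ∫ y in Ioo (0:ℝ) 1, L (0, y) * χ y := by
      rw [iCongr (g := fun y => M (0, y) * χ y - ε^2 * (L (0, y) * χ y))
        (fun y hy => by ring), integral_sub iM (iL.const_mul _), integral_const_mul]
    rw [hsplit]
    linarith
  -- ================= stage 2, right edge =================
  have stage2R : ∀ y ∈ Ioo (0:ℝ) 1, M (1, y) - ε^2 * L (1, y) = 0 := by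
    refine fundCV volume isOpen_Ioo
      ((hM1.sub (continuousOn_const.mul hL1))) ?_
    intro χ hχ hχc hχt
    obtain ⟨c00, c01, c02⟩ := tsupport_facts hχt 0 h0mem
    obtain ⟨c10, c11, c12⟩ := tsupport_facts hχt 1 h1mem
    have hEv := hE (fun p => eta2r p.1 * χ p.2) (contDiff_prodfun contDiff_eta2r hχ)
    beta_reduce at hEv
    have hb1 : bInt (fun p => L p * (eta2r p.1 * χ p.2))
        = ∫ y in Ioo (0:ℝ) 1, L (1, y) * χ y :=
      bInt_eq_single1 (fun y hy => by simp [eta2r_at0.1]) (fun y hy => by simp [eta2r_at1.1])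
        (fun x hx => by simp [c00]) (fun x hx => by simp [c10])
    have hb4 : bInt (fun p => M p * (eta2r p.1 * χ p.2))
        = ∫ y in Ioo (0:ℝ) 1, M (1, y) * χ y :=
      bInt_eq_single1 (fun y hy => by simp [eta2r_at0.1]) (fun y hy => by simp [eta2r_at1.1])
        (fun x hx => by simp [c00]) (fun x hx => by simp [c10])
    have hb2 : bInt (fun p => N p * lap (fun p : ℝ × ℝ => eta2r p.1 * χ p.2) p) = 0 :=
      bInt_zero
        (fun y hy => by simp [lap_prodfun contDiff_eta2r hχ, eta2r_at0.1, eta2r_at0.2.2])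
        (fun y hy => by simp [stage1R y hy])
        (fun x hx => by simp [lap_prodfun contDiff_eta2r hχ, c00, c02])
        (fun x hx => by simp [lap_prodfun contDiff_eta2r hχ, c10, c12])
    have hb3 : bInt (fun p => N p * nder (fun p : ℝ × ℝ => eta2r p.1 * χ p.2) p) = 0 :=
      bInt_zero
        (fun y hy => by simp [nder, pdx_prodfun contDiff_eta2r hχ, eta2r_at0.2.1])
        (fun y hy => by simp [nder, pdx_prodfun contDiff_eta2r hχ, eta2r_at1.2.1])
        (fun x hx => by simp [nder, hx.1.ne', hx.2.ne, pdy_prodfun contDiff_eta2r hχ, c01])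
        (fun x hx => by simp [nder, hx.1.ne', hx.2.ne, pdy_prodfun contDiff_eta2r hχ, c11])
    rw [hb1, hb2, hb3, hb4] at hEv
    have iM : IntegrableOn (fun y => M (1, y) * χ y) (Ioo (0:ℝ) 1) volume :=
      ion1' hM1 hχ.continuous hχc hχt
    have iL : IntegrableOn (fun y => L (1, y) * χ y) (Ioo (0:ℝ) 1) volume :=
      ion1' hL1 hχ.continuous hχc hχt
    have hsplit : ∫ y in Ioo (0:ℝ) 1, (M (1, y) - ε^2 * L (1, y)) * χ y
        = (∫ y in Ioo (0:ℝ) 1, M (1, y) * χ y)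
          - ε^2 * ∫ y in Ioo (0:ℝ) 1, L (1, y) * χ y := by
      rw [iCongr (g := fun y => M (1, y) * χ y - ε^2 * (L (1, y) * χ y))
        (fun y hy => by ring), integral_sub iM (iL.const_mul _), integral_const_mul]
    rw [hsplit]
    linarith
  exact ⟨stage1L, stage1R, stage2L, stage2R⟩

lemma horizontalEdges (hε : ε ≠ 0) (hγ : γ ≠ 0)
    (hL0 : ContinuousOn (fun x => L (x, 0)) (Ioo (0:ℝ) 1))
    (hL1 : ContinuousOn (fun x => L (x, 1)) (Ioo (0:ℝ) 1))
    (hN0 : ContinuousOn (fun x => N (x, 0)) (Ioo (0:ℝ) 1))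
    (hN1 : ContinuousOn (fun x => N (x, 1)) (Ioo (0:ℝ) 1))
    (hM0 : ContinuousOn (fun x => M (x, 0)) (Ioo (0:ℝ) 1))
    (hM1 : ContinuousOn (fun x => M (x, 1)) (Ioo (0:ℝ) 1))
    (hE : ∀ v : ℝ × ℝ → ℝ, ContDiff ℝ ∞ v →
      ε^2 * (-(bInt fun p => L p * v p) - (bInt fun p => N p * lap v p)
        + γ * (bInt fun p => N p * nder v p)) + (bInt fun p => M p * v p) = 0) :
    (∀ x ∈ Ioo (0:ℝ) 1, N (x, 0) = 0) ∧ (∀ x ∈ Ioo (0:ℝ) 1, N (x, 1) = 0) ∧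
    (∀ x ∈ Ioo (0:ℝ) 1, M (x, 0) - ε^2 * L (x, 0) = 0) ∧
    (∀ x ∈ Ioo (0:ℝ) 1, M (x, 1) - ε^2 * L (x, 1) = 0) := by
  have hIooIcc : Ioo (0:ℝ) 1 ⊆ Icc (0:ℝ) 1 := Ioo_subset_Icc_self
  have h0mem : (0:ℝ) ∉ Ioo (0:ℝ) 1 := by simp
  have h1mem : (1:ℝ) ∉ Ioo (0:ℝ) 1 := by simp
  have hne : ε^2 * γ ≠ 0 := mul_ne_zero (pow_ne_zero 2 hε) hγ
  -- ================= stage 1, bottom edge =================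
  have stage1B : ∀ x ∈ Ioo (0:ℝ) 1, N (x, 0) = 0 := by
    refine fundCV volume isOpen_Ioo (hN0) ?_
    intro χ hχ hχc hχt
    obtain ⟨c00, c01, c02⟩ := tsupport_facts hχt 0 h0mem
    obtain ⟨c10, c11, c12⟩ := tsupport_facts hχt 1 h1mem
    have hEv := hE (fun p => χ p.1 * eta1 p.2) (contDiff_prodfun hχ contDiff_eta1)
    beta_reduce at hEv
    have hb1 : bInt (fun p => L p * (χ p.1 * eta1 p.2)) = 0 :=
      bInt_zero (fun y hy => by simp [c00]) (fun y hy => by simp [c10])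
        (fun x hx => by simp [eta1_at0.1]) (fun x hx => by simp [eta1_at1.1])
    have hb4 : bInt (fun p => M p * (χ p.1 * eta1 p.2)) = 0 :=
      bInt_zero (fun y hy => by simp [c00]) (fun y hy => by simp [c10])
        (fun x hx => by simp [eta1_at0.1]) (fun x hx => by simp [eta1_at1.1])
    have hb2 : bInt (fun p => N p * lap (fun p : ℝ × ℝ => χ p.1 * eta1 p.2) p) = 0 :=
      bInt_zero
        (fun y hy => by simp [lap_prodfun hχ contDiff_eta1, c00, c02])
        (fun y hy => by simp [lap_prodfun hχ contDiff_eta1, c10, c12])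
        (fun x hx => by simp [lap_prodfun hχ contDiff_eta1, eta1_at0.1, eta1_at0.2.2])
        (fun x hx => by simp [lap_prodfun hχ contDiff_eta1, eta1_at1.1, eta1_at1.2.2])
    have hb3 : bInt (fun p => N p * nder (fun p : ℝ × ℝ => χ p.1 * eta1 p.2) p)
        = - ∫ x in Ioo (0:ℝ) 1, N (x, 0) * χ x := by
      rw [← integral_neg]
      refine bInt_eq_single2
        (fun y hy => by simp [nder, pdx_prodfun hχ contDiff_eta1, c01])
        (fun y hy => by simp [nder, pdx_prodfun hχ contDiff_eta1, c11])
        (fun x hx => by simp [nder, hx.1.ne', hx.2.ne, pdy_prodfun hχ contDiff_eta1, eta1_at0.2.1])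
        (fun x hx => by simp [nder, hx.1.ne', hx.2.ne, pdy_prodfun hχ contDiff_eta1, eta1_at1.2.1])
    rw [hb1, hb2, hb3, hb4] at hEv
    have hkey : (ε^2 * γ) * ∫ x in Ioo (0:ℝ) 1, N (x, 0) * χ x = 0 := by
      ring_nf; ring_nf at hEv; linarith
    have := (mul_eq_zero.mp hkey).resolve_left hne
    simpa using this
  -- ================= stage 1, top edge =================
  have stage1T : ∀ x ∈ Ioo (0:ℝ) 1, N (x, 1) = 0 := by
    refine fundCV volume isOpen_Ioo (hN1) ?_
    intro χ hχ hχc hχt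
    obtain ⟨c00, c01, c02⟩ := tsupport_facts hχt 0 h0mem
    obtain ⟨c10, c11, c12⟩ := tsupport_facts hχt 1 h1mem
    have hEv := hE (fun p => χ p.1 * eta1r p.2) (contDiff_prodfun hχ contDiff_eta1r)
    beta_reduce at hEv
    have hb1 : bInt (fun p => L p * (χ p.1 * eta1r p.2)) = 0 :=
      bInt_zero (fun y hy => by simp [c00]) (fun y hy => by simp [c10])
        (fun x hx => by simp [eta1r_at0.1]) (fun x hx => by simp [eta1r_at1.1])
    have hb4 : bInt (fun p => M p * (χ p.1 * eta1r p.2)) = 0 :=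
      bInt_zero (fun y hy => by simp [c00]) (fun y hy => by simp [c10])
        (fun x hx => by simp [eta1r_at0.1]) (fun x hx => by simp [eta1r_at1.1])
    have hb2 : bInt (fun p => N p * lap (fun p : ℝ × ℝ => χ p.1 * eta1r p.2) p) = 0 :=
      bInt_zero
        (fun y hy => by simp [lap_prodfun hχ contDiff_eta1r, c00, c02])
        (fun y hy => by simp [lap_prodfun hχ contDiff_eta1r, c10, c12])
        (fun x hx => by simp [lap_prodfun hχ contDiff_eta1r, eta1r_at0.1, eta1r_at0.2.2])
        (fun x hx => by simp [lap_prodfun hχ contDiff_eta1r, eta1r_at1.1, eta1r_at1.2.2])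
    have hb3 : bInt (fun p => N p * nder (fun p : ℝ × ℝ => χ p.1 * eta1r p.2) p)
        = ∫ x in Ioo (0:ℝ) 1, N (x, 1) * χ x :=
      bInt_eq_single3
        (fun y hy => by simp [nder, pdx_prodfun hχ contDiff_eta1r, c01])
        (fun y hy => by simp [nder, pdx_prodfun hχ contDiff_eta1r, c11])
        (fun x hx => by simp [nder, hx.1.ne', hx.2.ne, pdy_prodfun hχ contDiff_eta1r, eta1r_at0.2.1])
        (fun x hx => by simp [nder, hx.1.ne', hx.2.ne, pdy_prodfun hχ contDiff_eta1r, eta1r_at1.2.1])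
    rw [hb1, hb2, hb3, hb4] at hEv
    have hkey : (ε^2 * γ) * ∫ x in Ioo (0:ℝ) 1, N (x, 1) * χ x = 0 := by
      ring_nf; ring_nf at hEv; linarith
    have := (mul_eq_zero.mp hkey).resolve_left hne
    simpa using this
  -- ================= stage 2, bottom edge =================
  have stage2B : ∀ x ∈ Ioo (0:ℝ) 1, M (x, 0) - ε^2 * L (x, 0) = 0 := by
    refine fundCV volume isOpen_Ioo
      ((hM0.sub (continuousOn_const.mul hL0))) ?_
    intro χ hχ hχc hχt
    obtain ⟨c00, c01, c02⟩ := tsupport_facts hχt 0 h0mem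
    obtain ⟨c10, c11, c12⟩ := tsupport_facts hχt 1 h1mem
    have hEv := hE (fun p => χ p.1 * eta2 p.2) (contDiff_prodfun hχ contDiff_eta2)
    beta_reduce at hEv
    have hb1 : bInt (fun p => L p * (χ p.1 * eta2 p.2))
        = ∫ x in Ioo (0:ℝ) 1, L (x, 0) * χ x := by
      refine bInt_eq_single2 (fun y hy => by simp [c00]) (fun y hy => by simp [c10])
        (fun x hx => by rw [show eta2 0 = 1 from eta2_at0.1]; ring)
        (fun x hx => by simp [eta2_at1.1])
    have hb4 : bInt (fun p => M p * (χ p.1 * eta2 p.2))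
        = ∫ x in Ioo (0:ℝ) 1, M (x, 0) * χ x := by
      refine bInt_eq_single2 (fun y hy => by simp [c00]) (fun y hy => by simp [c10])
        (fun x hx => by rw [show eta2 0 = 1 from eta2_at0.1]; ring)
        (fun x hx => by simp [eta2_at1.1])
    have hb2 : bInt (fun p => N p * lap (fun p : ℝ × ℝ => χ p.1 * eta2 p.2) p) = 0 :=
      bInt_zero
        (fun y hy => by simp [lap_prodfun hχ contDiff_eta2, c00, c02])
        (fun y hy => by simp [lap_prodfun hχ contDiff_eta2, c10, c12])
        (fun x hx => by simp [stage1B x hx])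
        (fun x hx => by simp [lap_prodfun hχ contDiff_eta2, eta2_at1.1, eta2_at1.2.2])
    have hb3 : bInt (fun p => N p * nder (fun p : ℝ × ℝ => χ p.1 * eta2 p.2) p) = 0 :=
      bInt_zero
        (fun y hy => by simp [nder, pdx_prodfun hχ contDiff_eta2, c01])
        (fun y hy => by simp [nder, pdx_prodfun hχ contDiff_eta2, c11])
        (fun x hx => by simp [nder, hx.1.ne', hx.2.ne, pdy_prodfun hχ contDiff_eta2, eta2_at0.2.1])
        (fun x hx => by simp [nder, hx.1.ne', hx.2.ne, pdy_prodfun hχ contDiff_eta2, eta2_at1.2.1])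
    rw [hb1, hb2, hb3, hb4] at hEv
    have iM : IntegrableOn (fun x => M (x, 0) * χ x) (Ioo (0:ℝ) 1) volume :=
      ion1' hM0 hχ.continuous hχc hχt
    have iL : IntegrableOn (fun x => L (x, 0) * χ x) (Ioo (0:ℝ) 1) volume :=
      ion1' hL0 hχ.continuous hχc hχt
    have hsplit : ∫ x in Ioo (0:ℝ) 1, (M (x, 0) - ε^2 * L (x, 0)) * χ x
        = (∫ x in Ioo (0:ℝ) 1, M (x, 0) * χ x)
          - ε^2 * ∫ x in Ioo (0:ℝ) 1, L (x, 0) * χ x := by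
      rw [iCongr (g := fun x => M (x, 0) * χ x - ε^2 * (L (x, 0) * χ x))
        (fun x hx => by ring), integral_sub iM (iL.const_mul _), integral_const_mul]
    rw [hsplit]
    linarith
  -- ================= stage 2, top edge =================
  have stage2T : ∀ x ∈ Ioo (0:ℝ) 1, M (x, 1) - ε^2 * L (x, 1) = 0 := by
    refine fundCV volume isOpen_Ioo
      ((hM1.sub (continuousOn_const.mul hL1))) ?_
    intro χ hχ hχc hχt
    obtain ⟨c00, c01, c02⟩ := tsupport_facts hχt 0 h0mem
    obtain ⟨c10, c11, c12⟩ := tsupport_facts hχt 1 h1mem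
    have hEv := hE (fun p => χ p.1 * eta2r p.2) (contDiff_prodfun hχ contDiff_eta2r)
    beta_reduce at hEv
    have hb1 : bInt (fun p => L p * (χ p.1 * eta2r p.2))
        = ∫ x in Ioo (0:ℝ) 1, L (x, 1) * χ x := by
      refine bInt_eq_single3 (fun y hy => by simp [c00]) (fun y hy => by simp [c10])
        (fun x hx => by simp [eta2r_at0.1])
        (fun x hx => by rw [show eta2r 1 = 1 from eta2r_at1.1]; ring)
    have hb4 : bInt (fun p => M p * (χ p.1 * eta2r p.2))
        = ∫ x in Ioo (0:ℝ) 1, M (x, 1) * χ x := by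
      refine bInt_eq_single3 (fun y hy => by simp [c00]) (fun y hy => by simp [c10])
        (fun x hx => by simp [eta2r_at0.1])
        (fun x hx => by rw [show eta2r 1 = 1 from eta2r_at1.1]; ring)
    have hb2 : bInt (fun p => N p * lap (fun p : ℝ × ℝ => χ p.1 * eta2r p.2) p) = 0 :=
      bInt_zero
        (fun y hy => by simp [lap_prodfun hχ contDiff_eta2r, c00, c02])
        (fun y hy => by simp [lap_prodfun hχ contDiff_eta2r, c10, c12])
        (fun x hx => by simp [lap_prodfun hχ contDiff_eta2r, eta2r_at0.1, eta2r_at0.2.2])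
        (fun x hx => by simp [stage1T x hx])
    have hb3 : bInt (fun p => N p * nder (fun p : ℝ × ℝ => χ p.1 * eta2r p.2) p) = 0 :=
      bInt_zero
        (fun y hy => by simp [nder, pdx_prodfun hχ contDiff_eta2r, c01])
        (fun y hy => by simp [nder, pdx_prodfun hχ contDiff_eta2r, c11])
        (fun x hx => by simp [nder, hx.1.ne', hx.2.ne, pdy_prodfun hχ contDiff_eta2r, eta2r_at0.2.1])
        (fun x hx => by simp [nder, hx.1.ne', hx.2.ne, pdy_prodfun hχ contDiff_eta2r, eta2r_at1.2.1])
    rw [hb1, hb2, hb3, hb4] at hEv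
    have iM : IntegrableOn (fun x => M (x, 1) * χ x) (Ioo (0:ℝ) 1) volume :=
      ion1' hM1 hχ.continuous hχc hχt
    have iL : IntegrableOn (fun x => L (x, 1) * χ x) (Ioo (0:ℝ) 1) volume :=
      ion1' hL1 hχ.continuous hχc hχt
    have hsplit : ∫ x in Ioo (0:ℝ) 1, (M (x, 1) - ε^2 * L (x, 1)) * χ x
        = (∫ x in Ioo (0:ℝ) 1, M (x, 1) * χ x)
          - ε^2 * ∫ x in Ioo (0:ℝ) 1, L (x, 1) * χ x := by
      rw [iCongr (g := fun x => M (x, 1) * χ x - ε^2 * (L (x, 1) * χ x))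
        (fun x hx => by ring), integral_sub iM (iL.const_mul _), integral_const_mul]
    rw [hsplit]
    linarith
  exact ⟨stage1B, stage1T, stage2B, stage2T⟩

end edges


lemma tsupport_facts2 {g : ℝ × ℝ → ℝ} (hg : tsupport g ⊆ unitSq) :
    ∀ p : ℝ × ℝ, p ∉ unitSq → g p = 0 ∧ nder g p = 0 ∧ lap g p = 0 := by
  set W := (tsupport g)ᶜ with hWdef
  have hWo : IsOpen W := (isClosed_tsupport g).isOpen_compl
  have hmem : ∀ p : ℝ × ℝ, p ∉ unitSq → p ∈ W := fun p hp hmem => hp (hg hmem)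
  have h0 : ∀ w ∈ W, g w = 0 := fun w hw => image_eq_zero_of_notMem_tsupport hw
  have h1 : ∀ w ∈ W, fderiv ℝ g w = 0 := by
    intro w hw
    have he : g =ᶠ[nhds w] (fun _ => (0:ℝ)) := Filter.eventually_of_mem (hWo.mem_nhds hw) h0
    rw [he.fderiv_eq]
    exact fderiv_const_apply 0
  have hx : ∀ w ∈ W, pdx g w = 0 := fun w hw => by rw [pdx, h1 w hw]; rfl
  have hy : ∀ w ∈ W, pdy g w = 0 := fun w hw => by rw [pdy, h1 w hw]; rfl
  have hxx : ∀ w ∈ W, pdx (pdx g) w = 0 := by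
    intro w hw
    have he : pdx g =ᶠ[nhds w] (fun _ => (0:ℝ)) := Filter.eventually_of_mem (hWo.mem_nhds hw) hx
    rw [pdx, he.fderiv_eq, fderiv_const_apply 0]; rfl
  have hyy : ∀ w ∈ W, pdy (pdy g) w = 0 := by
    intro w hw
    have he : pdy g =ᶠ[nhds w] (fun _ => (0:ℝ)) := Filter.eventually_of_mem (hWo.mem_nhds hw) hy
    rw [pdy, he.fderiv_eq, fderiv_const_apply 0]; rfl
  intro p hp
  refine ⟨h0 p (hmem p hp), ?_, ?_⟩
  · rw [nder]
    split_ifs <;> simp [hx p (hmem p hp), hy p (hmem p hp)]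
  · rw [lap, hxx p (hmem p hp), hyy p (hmem p hp)]; ring


/-- **Consistency of the Nitsche variational formulation.** Let `γ > 0`. If `u(t,·)`
is `C⁴` on a neighborhood of `closure Ω` for each `t`, `∂ₜu` is continuous, and the
Nitsche variational identity
`∫_Ω ∂ₜu v + ε² a₁(u(t,·), v) + ∫_Ω ∇f(u(t,·))·∇v = 0`
holds for every `t ∈ [0,T]` and every smooth `v`, then for every `t ∈ [0,T]`: `u`
satisfies the Cahn–Hilliard equation `∂ₜu + ε²Δ²u − Δf(u) = 0` at every point of `Ω`,
and `∂ₙu = 0` and `∂ₙ(−ε²Δu + f(u)) = 0` on the four open edges of `∂Ω`. -/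
theorem nitsche_implies_cahn_hilliard (ε T γ : ℝ) (hε : 0 < ε) (hT : 0 < T) (hγ : 0 < γ)
    (u : ℝ → ℝ × ℝ → ℝ)
    (hreg : ∀ t : ℝ, ∃ s : Set (ℝ × ℝ),
      IsOpen s ∧ closure unitSq ⊆ s ∧ ContDiffOn ℝ 4 (u t) s)
    (hcont : Continuous fun q : ℝ × (ℝ × ℝ) => dtu u q.1 q.2)
    (hvar : ∀ t ∈ Icc (0:ℝ) T, ∀ v : ℝ × ℝ → ℝ, ContDiff ℝ (⊤ : ℕ∞) v →
      (∫ p in unitSq, dtu u t p * v p) + ε^2 * a1 γ (u t) v +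
        (∫ p in unitSq,
          (pdx (fun q => fDW (u t q)) p * pdx v p +
           pdy (fun q => fDW (u t q)) p * pdy v p)) = 0) :
    ∀ t ∈ Icc (0:ℝ) T,
      (∀ p ∈ unitSq,
        dtu u t p + ε^2 * lap (lap (u t)) p - lap (fun q => fDW (u t q)) p = 0) ∧
      ZeroNormalDeriv (u t) ∧
      ZeroNormalDeriv (fun q => -ε^2 * lap (u t) q + fDW (u t q)) := by
  intro t ht
  obtain ⟨s, hsOpen, hcl, hu4⟩ := hreg t
  have husq : unitSq ⊆ s := fun p hp => hcl (subset_closure hp)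
  -- basic regularity
  have hw4 : ∀ p ∈ s, ContDiffAt ℝ 4 (u t) p := fun p hp => hu4.contDiffAt (hsOpen.mem_nhds hp)
  have hfDW : ContDiff ℝ ∞ fDW := by
    have h : ContDiff ℝ ∞ (fun x : ℝ => x^3 - x) := (contDiff_id.pow 3).sub contDiff_id
    exact h
  have hfu4 : ∀ p ∈ s, ContDiffAt ℝ 4 (fun q => fDW (u t q)) p := fun p hp =>
    (hfDW.contDiffAt.of_le (WithTop.coe_le_coe.mpr le_top)).comp p (hw4 p hp)
  have hlapw2 : ∀ p ∈ s, ContDiffAt ℝ 2 (lap (u t)) p := fun p hp => by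
    have h := contDiffAt_lap (n := 2) (φ := u t) (p := p) (by exact_mod_cast hw4 p hp)
    exact_mod_cast h
  have hfu2 : ∀ p ∈ s, ContDiffAt ℝ 2 (fun q => fDW (u t q)) p := fun p hp =>
    (hfu4 p hp).of_le (by norm_num)
  have hlapw1 : ∀ p ∈ s, ContDiffAt ℝ 1 (lap (u t)) p := fun p hp =>
    (hlapw2 p hp).of_le (by norm_num)
  -- continuity facts
  have hc_laplapw : ∀ p ∈ s, ContinuousAt (lap (lap (u t))) p := fun p hp =>
    (contDiffAt_lap (n := 0) (by exact_mod_cast hlapw2 p hp)).continuousAt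
  have hc_lapfu : ∀ p ∈ s, ContinuousAt (lap (fun q => fDW (u t q))) p := fun p hp =>
    (contDiffAt_lap (n := 0) (by exact_mod_cast hfu2 p hp)).continuousAt
  have hcdtu : Continuous (fun p : ℝ × ℝ => dtu u t p) :=
    hcont.comp (continuous_const.prodMk continuous_id)
  -- the master integrated-by-parts identity
  have E0 : ∀ v : ℝ × ℝ → ℝ, ContDiff ℝ ∞ v →
      (∫ p in unitSq, dtu u t p * v p)
      + ε^2 * ((∫ p in unitSq, lap (lap (u t)) p * v p)
          - bInt (fun p => nder (lap (u t)) p * v p)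
          - bInt (fun p => nder (u t) p * lap v p)
          + γ * bInt (fun p => nder (u t) p * nder v p))
      + ((bInt fun p => nder (fun q => fDW (u t q)) p * v p)
          - ∫ p in unitSq, lap (fun q => fDW (u t q)) p * v p) = 0 := by
    intro v hv
    have hv2 : ∀ p ∈ s, ContDiffAt ℝ 2 v p := fun p _ =>
      hv.contDiffAt.of_le (WithTop.coe_le_coe.mpr le_top)
    have hv1 : ∀ p ∈ s, ContDiffAt ℝ 1 v p := fun p _ =>
      hv.contDiffAt.of_le (WithTop.coe_le_coe.mpr le_top)
    have g1 := green hsOpen hcl hlapw2 hv1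
    have g2 := green hsOpen hcl hv2 hlapw1
    have g3 := green hsOpen hcl hfu2 hv1
    have c1 : (∫ p in unitSq, lap (u t) p * lap v p) = ∫ p in unitSq, lap v p * lap (u t) p :=
      setIntegral_congr_fun isOpen_unitSq.measurableSet (fun p _ => mul_comm _ _)
    have c2 : (∫ p in unitSq, (pdx v p * pdx (lap (u t)) p + pdy v p * pdy (lap (u t)) p))
        = ∫ p in unitSq, (pdx (lap (u t)) p * pdx v p + pdy (lap (u t)) p * pdy v p) :=
      setIntegral_congr_fun isOpen_unitSq.measurableSet (fun p _ => by ring)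
    have c3 : bInt (fun p => lap (u t) p * nder v p) = bInt (fun p => nder v p * lap (u t) p) :=
      congrArg bInt (funext fun p => mul_comm _ _)
    have hv0 := hvar t ht v hv
    simp only [a1] at hv0
    have hAB : (∫ p in unitSq, lap (u t) p * lap v p)
        - bInt (fun p => lap (u t) p * nder v p)
        - bInt (fun p => nder (u t) p * lap v p)
        + γ * bInt (fun p => nder (u t) p * nder v p)
        = (∫ p in unitSq, lap (lap (u t)) p * v p)
          - bInt (fun p => nder (lap (u t)) p * v p)
          - bInt (fun p => nder (u t) p * lap v p)
          + γ * bInt (fun p => nder (u t) p * nder v p) := by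
      linarith [g1, g2, c1, c2, c3]
    have hmul := congrArg (fun x : ℝ => ε^2 * x) hAB
    linarith [hv0, hmul, g3]
  -- continuity of the interior residual
  have hGt_cont : ContinuousOn (fun p => dtu u t p + ε^2 * lap (lap (u t)) p
      - lap (fun q => fDW (u t q)) p) unitSq := by
    refine ContinuousOn.sub (ContinuousOn.add (hcdtu.continuousOn) ?_) ?_
    · exact continuousOn_const.mul (fun p hp => ((hc_laplapw p (husq hp)).continuousWithinAt))
    · exact fun p hp => ((hc_lapfu p (husq hp)).continuousWithinAt)
  have hsplit : ∀ v : ℝ × ℝ → ℝ, Continuous v →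
      (∫ p in unitSq, (dtu u t p + ε^2 * lap (lap (u t)) p
          - lap (fun q => fDW (u t q)) p) * v p)
      = (∫ p in unitSq, dtu u t p * v p)
        + ε^2 * (∫ p in unitSq, lap (lap (u t)) p * v p)
        - ∫ p in unitSq, lap (fun q => fDW (u t q)) p * v p := by
    intro v hv
    have i1 : IntegrableOn (fun p => dtu u t p * v p) unitSq volume :=
      ion2 ((hcdtu.continuousOn).mul hv.continuousOn)
    have c2 : ContinuousOn (lap (lap (u t))) (closure unitSq) :=
      fun p hp => (hc_laplapw p (hcl hp)).continuousWithinAt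
    have c3 : ContinuousOn (lap (fun q => fDW (u t q))) (closure unitSq) :=
      fun p hp => (hc_lapfu p (hcl hp)).continuousWithinAt
    have i2 : IntegrableOn (fun p => lap (lap (u t)) p * v p) unitSq volume :=
      ion2 (c2.mul hv.continuousOn)
    have i3 : IntegrableOn (fun p => lap (fun q => fDW (u t q)) p * v p) unitSq volume :=
      ion2 (c3.mul hv.continuousOn)
    have hcg : (∫ p in unitSq, (dtu u t p + ε^2 * lap (lap (u t)) p
          - lap (fun q => fDW (u t q)) p) * v p)
        = ∫ p in unitSq, (dtu u t p * v p + ε^2 * (lap (lap (u t)) p * v p)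
          - lap (fun q => fDW (u t q)) p * v p) :=
      setIntegral_congr_fun isOpen_unitSq.measurableSet (fun p _ => by ring)
    have hF : IntegrableOn (fun p => dtu u t p * v p
        + ε^2 * (lap (lap (u t)) p * v p)) unitSq volume := i1.add (i2.const_mul _)
    have h5 := integral_sub hF i3
    have h6 := integral_add i1 (i2.const_mul (ε^2) : IntegrableOn
      (fun p => ε^2 * (lap (lap (u t)) p * v p)) unitSq volume)
    have h7 : (∫ p in unitSq, ε^2 * (lap (lap (u t)) p * v p))
        = ε^2 * ∫ p in unitSq, lap (lap (u t)) p * v p := integral_const_mul _ _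
    beta_reduce at h5 h6
    rw [hcg]
    linarith [h5, h6, h7]
  -- Step 1 : interior equation
  have hG0 : ∀ p ∈ unitSq,
      dtu u t p + ε^2 * lap (lap (u t)) p - lap (fun q => fDW (u t q)) p = 0 := by
    refine fundCV volume isOpen_unitSq hGt_cont ?_
    intro g hg hgc hgt
    have hfacts := tsupport_facts2 hgt
    have m0 : ∀ y : ℝ, ((0:ℝ), y) ∉ unitSq := fun y => by simp [unitSq]
    have m1 : ∀ y : ℝ, ((1:ℝ), y) ∉ unitSq := fun y => by simp [unitSq]
    have m2 : ∀ x : ℝ, ((x:ℝ), (0:ℝ)) ∉ unitSq := fun x => by simp [unitSq]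
    have m3 : ∀ x : ℝ, ((x:ℝ), (1:ℝ)) ∉ unitSq := fun x => by simp [unitSq]
    have hb1 : bInt (fun p => nder (lap (u t)) p * g p) = 0 :=
      bInt_zero (fun y hy => by simp [(hfacts _ (m0 y)).1])
        (fun y hy => by simp [(hfacts _ (m1 y)).1])
        (fun x hx => by simp [(hfacts _ (m2 x)).1])
        (fun x hx => by simp [(hfacts _ (m3 x)).1])
    have hb2 : bInt (fun p => nder (u t) p * lap g p) = 0 :=
      bInt_zero (fun y hy => by simp [(hfacts _ (m0 y)).2.2])
        (fun y hy => by simp [(hfacts _ (m1 y)).2.2])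
        (fun x hx => by simp [(hfacts _ (m2 x)).2.2])
        (fun x hx => by simp [(hfacts _ (m3 x)).2.2])
    have hb3 : bInt (fun p => nder (u t) p * nder g p) = 0 :=
      bInt_zero (fun y hy => by simp [(hfacts _ (m0 y)).2.1])
        (fun y hy => by simp [(hfacts _ (m1 y)).2.1])
        (fun x hx => by simp [(hfacts _ (m2 x)).2.1])
        (fun x hx => by simp [(hfacts _ (m3 x)).2.1])
    have hb4 : bInt (fun p => nder (fun q => fDW (u t q)) p * g p) = 0 :=
      bInt_zero (fun y hy => by simp [(hfacts _ (m0 y)).1])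
        (fun y hy => by simp [(hfacts _ (m1 y)).1])
        (fun x hx => by simp [(hfacts _ (m2 x)).1])
        (fun x hx => by simp [(hfacts _ (m3 x)).1])
    have h1 := E0 g hg
    rw [hb1, hb2, hb3, hb4] at h1
    rw [hsplit g hg.continuous]
    linarith
  -- Step 2 : boundary identity
  have E1 : ∀ v : ℝ × ℝ → ℝ, ContDiff ℝ ∞ v →
      ε^2 * (-(bInt fun p => nder (lap (u t)) p * v p)
        - (bInt fun p => nder (u t) p * lap v p)
        + γ * (bInt fun p => nder (u t) p * nder v p))
      + (bInt fun p => nder (fun q => fDW (u t q)) p * v p) = 0 := by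
    intro v hv
    have h1 := E0 v hv
    have h2 : (∫ p in unitSq, (dtu u t p + ε^2 * lap (lap (u t)) p
        - lap (fun q => fDW (u t q)) p) * v p) = 0 := by
      have hcg : (∫ p in unitSq, (dtu u t p + ε^2 * lap (lap (u t)) p
            - lap (fun q => fDW (u t q)) p) * v p)
          = ∫ p in unitSq, (0:ℝ) :=
        setIntegral_congr_fun isOpen_unitSq.measurableSet
          (fun p hp => by rw [hG0 p hp, zero_mul])
      rw [hcg]
      simp
    have h3 := hsplit v hv.continuous
    linarith
  -- membership and edge-restriction continuity helpers
  have hmemcl : ∀ a b : ℝ, a ∈ Icc (0:ℝ) 1 → b ∈ Icc (0:ℝ) 1 → (a, b) ∈ s := by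
    intro a b ha hb
    refine hcl ?_
    rw [closure_unitSq]
    exact mem_Icc.mpr ⟨Prod.mk_le_mk.mpr ⟨ha.1, hb.1⟩, Prod.mk_le_mk.mpr ⟨ha.2, hb.2⟩⟩
  have edgeV : ∀ (f : ℝ × ℝ → ℝ), (∀ p ∈ s, ContinuousAt f p) → ∀ c ∈ Icc (0:ℝ) 1,
      ContinuousOn (fun y => f (c, y)) (Ioo (0:ℝ) 1) := by
    intro f hf c hc y hy
    exact ((hf (c, y) (hmemcl c y hc (Ioo_subset_Icc_self hy))).comp
      ((continuous_const.prodMk continuous_id).continuousAt)).continuousWithinAt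
  have edgeH : ∀ (f : ℝ × ℝ → ℝ), (∀ p ∈ s, ContinuousAt f p) → ∀ c ∈ Icc (0:ℝ) 1,
      ContinuousOn (fun x => f (x, c)) (Ioo (0:ℝ) 1) := by
    intro f hf c hc x hx
    have hfc : ContinuousAt (fun z : ℝ => (z, c)) x :=
      (continuous_id.prodMk continuous_const).continuousAt
    exact (ContinuousAt.comp (g := f) (f := fun z : ℝ => (z, c)) (x := x)
      (hf (x, c) (hmemcl x c (Ioo_subset_Icc_self hx) hc)) hfc).continuousWithinAt
  have hCpdxw : ∀ p ∈ s, ContinuousAt (pdx (u t)) p := fun p hp =>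
    (contDiffAt_pdx (n := 3) (by exact_mod_cast hw4 p hp)).continuousAt
  have hCpdyw : ∀ p ∈ s, ContinuousAt (pdy (u t)) p := fun p hp =>
    (contDiffAt_pdy (n := 3) (by exact_mod_cast hw4 p hp)).continuousAt
  have hCpdxl : ∀ p ∈ s, ContinuousAt (pdx (lap (u t))) p := fun p hp =>
    (contDiffAt_pdx (n := 1) (by exact_mod_cast hlapw2 p hp)).continuousAt
  have hCpdyl : ∀ p ∈ s, ContinuousAt (pdy (lap (u t))) p := fun p hp =>
    (contDiffAt_pdy (n := 1) (by exact_mod_cast hlapw2 p hp)).continuousAt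
  have hCpdxf : ∀ p ∈ s, ContinuousAt (pdx (fun q => fDW (u t q))) p := fun p hp =>
    (contDiffAt_pdx (n := 3) (by exact_mod_cast hfu4 p hp)).continuousAt
  have hCpdyf : ∀ p ∈ s, ContinuousAt (pdy (fun q => fDW (u t q))) p := fun p hp =>
    (contDiffAt_pdy (n := 3) (by exact_mod_cast hfu4 p hp)).continuousAt
  have h01 : (0:ℝ) ∈ Icc (0:ℝ) 1 := by norm_num
  have h11 : (1:ℝ) ∈ Icc (0:ℝ) 1 := by norm_num
  -- vertical edges
  obtain ⟨vs1L, vs1R, vs2L, vs2R⟩ :=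
    verticalEdges (L := nder (lap (u t))) (N := nder (u t))
      (M := nder (fun q => fDW (u t q))) (ne_of_gt hε) (ne_of_gt hγ)
      (((edgeV _ hCpdxl 0 h01).neg).congr (fun y hy => by simp [nder]))
      ((edgeV _ hCpdxl 1 h11).congr (fun y hy => by simp [nder]))
      (((edgeV _ hCpdxw 0 h01).neg).congr (fun y hy => by simp [nder]))
      ((edgeV _ hCpdxw 1 h11).congr (fun y hy => by simp [nder]))
      (((edgeV _ hCpdxf 0 h01).neg).congr (fun y hy => by simp [nder]))
      ((edgeV _ hCpdxf 1 h11).congr (fun y hy => by simp [nder]))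
      E1
  obtain ⟨hs1B, hs1T, hs2B, hs2T⟩ :=
    horizontalEdges (L := nder (lap (u t))) (N := nder (u t))
      (M := nder (fun q => fDW (u t q))) (ne_of_gt hε) (ne_of_gt hγ)
      (((edgeH _ hCpdyl 0 h01).neg).congr
        (fun x hx => by simp [nder, hx.1.ne', hx.2.ne]))
      ((edgeH _ hCpdyl 1 h11).congr (fun x hx => by simp [nder, hx.1.ne', hx.2.ne]))
      (((edgeH _ hCpdyw 0 h01).neg).congr
        (fun x hx => by simp [nder, hx.1.ne', hx.2.ne]))
      ((edgeH _ hCpdyw 1 h11).congr (fun x hx => by simp [nder, hx.1.ne', hx.2.ne]))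
      (((edgeH _ hCpdyf 0 h01).neg).congr
        (fun x hx => by simp [nder, hx.1.ne', hx.2.ne]))
      ((edgeH _ hCpdyf 1 h11).congr (fun x hx => by simp [nder, hx.1.ne', hx.2.ne]))
      E1
  -- derivative of the chemical potential
  have hpdΦ : ∀ p ∈ s,
      pdx (fun q => -ε^2 * lap (u t) q + fDW (u t q)) p
        = -ε^2 * pdx (lap (u t)) p + pdx (fun q => fDW (u t q)) p ∧
      pdy (fun q => -ε^2 * lap (u t) q + fDW (u t q)) p
        = -ε^2 * pdy (lap (u t)) p + pdy (fun q => fDW (u t q)) p := by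
    intro p hp
    have hd1 : DifferentiableAt ℝ (lap (u t)) p := (hlapw2 p hp).differentiableAt (by norm_num)
    have hd2 : DifferentiableAt ℝ (fun q => fDW (u t q)) p :=
      (hfu4 p hp).differentiableAt (by norm_num)
    constructor
    · rw [pdx, fderiv_fun_add (hd1.const_mul _) hd2, fderiv_const_mul hd1]
      simp [pdx]
    · rw [pdy, fderiv_fun_add (hd1.const_mul _) hd2, fderiv_const_mul hd1]
      simp [pdy]
  refine ⟨hG0, ⟨fun y hy => ⟨?_, ?_⟩, fun x hx => ⟨?_, ?_⟩⟩,
    ⟨fun y hy => ⟨?_, ?_⟩, fun x hx => ⟨?_, ?_⟩⟩⟩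
  · simpa [nder] using vs1L y hy
  · simpa [nder] using vs1R y hy
  · simpa [nder, hx.1.ne', hx.2.ne] using hs1B x hx
  · simpa [nder, hx.1.ne', hx.2.ne] using hs1T x hx
  · have h2 := vs2L y hy
    simp [nder] at h2
    have hp := (hpdΦ (0, y) (hmemcl 0 y h01 (Ioo_subset_Icc_self hy))).1
    rw [hp]; linarith
  · have h2 := vs2R y hy
    simp [nder] at h2
    have hp := (hpdΦ (1, y) (hmemcl 1 y h11 (Ioo_subset_Icc_self hy))).1
    rw [hp]; linarith
  · have h2 := hs2B x hx
    simp [nder, hx.1.ne', hx.2.ne] at h2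
    have hp := (hpdΦ (x, 0) (hmemcl x 0 (Ioo_subset_Icc_self hx) h01)).2
    rw [hp]; linarith
  · have h2 := hs2T x hx
    simp [nder, hx.1.ne', hx.2.ne] at h2
    have hp := (hpdΦ (x, 1) (hmemcl x 1 (Ioo_subset_Icc_self hx) h11)).2
    rw [hp]; linarith
end
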